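/- arXiv:1306.5616 — 2 statements merged into one kernel-verified Lean document; each statement's English description precedes it below -/
import Mathlib

section
/- Let ν ∈ (0,1), c_ν := ν² - 1/4, γ > 0, n a positive integer, and let f = f_r + f_s ∈ D(A). Set m_ν := min{1, 4ν²}. Then ∫₋₁¹ (A_n f)(x) f(x) dx ≥ m_ν ∫₋₁¹ f_r'(x)² dx + (nπ)² ∫₋₁¹ |x|^(2γ) f(x)² dx. -/
open MeasureTheory Real
open Set
lemma triangle_swap (g ψ : ℝ → ℝ)
    (hF : Integrable (fun p : ℝ × ℝ => if p.2 ≤ p.1 then g p.1 * ψ p.2 else 0)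
      ((volume.restrict (Set.Ioc (0:ℝ) 1)).prod (volume.restrict (Set.Ioc (0:ℝ) 1)))) :
    ∫ x in (0:ℝ)..1, g x * (∫ t in (0:ℝ)..x, ψ t)
      = ∫ t in (0:ℝ)..1, ψ t * (∫ x in t..(1:ℝ), g x) := by
  have h01 : (0:ℝ) ≤ 1 := by norm_num
  have key := MeasureTheory.integral_integral_swap (μ := volume.restrict (Set.Ioc (0:ℝ) 1))
      (ν := volume.restrict (Set.Ioc (0:ℝ) 1))
      (f := fun x t => if t ≤ x then g x * ψ t else 0) hF
  rw [intervalIntegral.integral_of_le h01, intervalIntegral.integral_of_le h01]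
  calc ∫ x in Set.Ioc (0:ℝ) 1, g x * (∫ t in (0:ℝ)..x, ψ t)
      = ∫ x in Set.Ioc (0:ℝ) 1, ∫ t in Set.Ioc (0:ℝ) 1, (if t ≤ x then g x * ψ t else 0) := by
        refine setIntegral_congr_fun measurableSet_Ioc (fun x hx => ?_)
        have : ∀ t, (if t ≤ x then g x * ψ t else 0) = Set.indicator (Set.Iic x) (fun t => g x * ψ t) t := by
          intro t; simp [Set.indicator_apply, Set.mem_Iic]
        simp only [this]
        rw [MeasureTheory.integral_indicator measurableSet_Iic,
          Measure.restrict_restrict measurableSet_Iic]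
        have : Set.Iic x ∩ Set.Ioc (0:ℝ) 1 = Set.Ioc 0 x := by
          ext y; simp only [Set.mem_inter_iff, Set.mem_Iic, Set.mem_Ioc]
          constructor
          · rintro ⟨h1, h2, h3⟩; exact ⟨h2, h1⟩
          · rintro ⟨h1, h2⟩; exact ⟨h2, h1, h2.trans hx.2⟩
        rw [this, intervalIntegral.integral_of_le hx.1.le, integral_const_mul]
    _ = ∫ t in Set.Ioc (0:ℝ) 1, ∫ x in Set.Ioc (0:ℝ) 1, (if t ≤ x then g x * ψ t else 0) := key
    _ = ∫ t in Set.Ioc (0:ℝ) 1, ψ t * (∫ x in t..(1:ℝ), g x) := by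
        refine setIntegral_congr_fun measurableSet_Ioc (fun t ht => ?_)
        have : ∀ x, (if t ≤ x then g x * ψ t else 0) = Set.indicator (Set.Ici t) (fun x => ψ t * g x) x := by
          intro x; simp [Set.indicator_apply, Set.mem_Ici, mul_comm]
        simp only [this]
        rw [MeasureTheory.integral_indicator measurableSet_Ici,
          Measure.restrict_restrict measurableSet_Ici]
        have : Set.Ici t ∩ Set.Ioc (0:ℝ) 1 = Set.Icc t 1 := by
          ext y; simp only [Set.mem_inter_iff, Set.mem_Ici, Set.mem_Ioc, Set.mem_Icc]
          constructor
          · rintro ⟨h1, h2, h3⟩; exact ⟨h1, h3⟩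
          · rintro ⟨h1, h2⟩; exact ⟨h1, ht.1.trans_le h1, h2⟩
        rw [this, MeasureTheory.integral_Icc_eq_integral_Ioc,
          ← intervalIntegral.integral_of_le ht.2, intervalIntegral.integral_const_mul]

lemma swap_with_bound (w φ M : ℝ → ℝ)
    (hw : AEStronglyMeasurable w (volume.restrict (Ioc 0 1)))
    (hφ : IntegrableOn φ (Ioc 0 1) volume)
    (hM : IntegrableOn M (Ioc 0 1) volume)
    (hbound : ∀ x ∈ Ioc (0:ℝ) 1, |w x| * (∫ t in (0:ℝ)..x, |φ t|) ≤ M x) :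
    ∫ x in (0:ℝ)..1, w x * (∫ t in (0:ℝ)..x, φ t)
      = ∫ t in (0:ℝ)..1, φ t * (∫ x in t..(1:ℝ), w x) := by
  set μ := volume.restrict (Ioc (0:ℝ) 1) with hμ
  have hFeq : (fun p : ℝ × ℝ => if p.2 ≤ p.1 then w p.1 * φ p.2 else 0)
      = Set.indicator {p : ℝ × ℝ | p.2 ≤ p.1} (fun p => w p.1 * φ p.2) := by
    funext p; simp [Set.indicator_apply, Set.mem_setOf_eq]
  have hmeasS : MeasurableSet {p : ℝ × ℝ | p.2 ≤ p.1} :=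
    measurableSet_le measurable_snd measurable_fst
  have haesmF : AEStronglyMeasurable
      (fun p : ℝ × ℝ => if p.2 ≤ p.1 then w p.1 * φ p.2 else 0) (μ.prod μ) := by
    rw [hFeq]
    exact ((hw.comp_fst).mul (hφ.aestronglyMeasurable.comp_snd)).indicator hmeasS
  have hsec : ∀ x : ℝ, (fun t => if t ≤ x then w x * φ t else 0)
      = Set.indicator (Iic x) (fun t => w x * φ t) := by
    intro x; funext t; simp [Set.indicator_apply]
  have hFint : Integrable (fun p : ℝ × ℝ => if p.2 ≤ p.1 then w p.1 * φ p.2 else 0)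
      (μ.prod μ) := by
    refine (integrable_prod_iff haesmF).2 ⟨?_, ?_⟩
    · refine Filter.Eventually.of_forall (fun x => ?_)
      simp only [hsec x]
      exact (hφ.const_mul (w x)).indicator measurableSet_Iic
    · refine Integrable.mono' hM
        ((haesmF.norm).integral_prod_right') ?_
      rw [hμ, ae_restrict_iff' measurableSet_Ioc]
      refine Filter.Eventually.of_forall (fun x hx => ?_)
      have hval : ∀ t : ℝ, ‖if t ≤ x then w x * φ t else 0‖
          = Set.indicator (Iic x) (fun t => |w x| * |φ t|) t := by
        intro t
        simp only [Set.indicator_apply, Set.mem_Iic]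
        split <;> simp [abs_mul]
      have : (∫ t, ‖if t ≤ x then w x * φ t else 0‖ ∂μ)
          = |w x| * ∫ t in (0:ℝ)..x, |φ t| := by
        simp only [hval]
        rw [hμ, MeasureTheory.integral_indicator measurableSet_Iic,
          Measure.restrict_restrict measurableSet_Iic]
        have hseteq : Iic x ∩ Ioc (0:ℝ) 1 = Ioc 0 x := by
          ext y; simp only [Set.mem_inter_iff, Set.mem_Iic, Set.mem_Ioc]
          exact ⟨fun ⟨h1, h2, _⟩ => ⟨h2, h1⟩, fun ⟨h1, h2⟩ => ⟨h2, h1, h2.trans hx.2⟩⟩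
        rw [hseteq, intervalIntegral.integral_of_le hx.1.le, integral_const_mul]
      rw [Real.norm_eq_abs, abs_of_nonneg (integral_nonneg (fun t => norm_nonneg _)), this]
      exact hbound x hx
  exact triangle_swap w φ hFint
lemma uIcc01 : uIcc (0:ℝ) 1 = Icc 0 1 := uIcc_of_le (by norm_num)

section OneSided
variable {u u' u'' : ℝ → ℝ}

lemma u'cont (h2 : IntervalIntegrable u'' volume 0 1)
    (hu' : ∀ x ∈ Icc (0:ℝ) 1, u' x = ∫ t in (0:ℝ)..x, u'' t) :
    ContinuousOn u' (Icc 0 1) := by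
  have h := intervalIntegral.continuousOn_primitive_interval
    (a := (0:ℝ)) (b := (1:ℝ)) (f := u'') (μ := volume) ?_
  · rw [uIcc01] at h
    exact h.congr fun x hx => (hu' x hx)
  · rw [uIcc01]
    exact (intervalIntegrable_iff_integrableOn_Icc_of_le (by norm_num)).mp h2

lemma u'int (h2 : IntervalIntegrable u'' volume 0 1)
    (hu' : ∀ x ∈ Icc (0:ℝ) 1, u' x = ∫ t in (0:ℝ)..x, u'' t) :
    IntervalIntegrable u' volume 0 1 :=
  ContinuousOn.intervalIntegrable (by rw [uIcc01]; exact u'cont h2 hu')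

lemma absint_bound (h2 : IntervalIntegrable u'' volume 0 1)
    (h2sq : IntervalIntegrable (fun x => u'' x ^ 2) volume 0 1) :
    ∀ x ∈ Icc (0:ℝ) 1, (∫ t in (0:ℝ)..x, |u'' t|)
      ≤ Real.sqrt ((∫ t in (0:ℝ)..1, u'' t ^ 2) + 1) * Real.sqrt x := by
  intro x hx
  set A : ℝ := ∫ t in (0:ℝ)..1, u'' t ^ 2 with hA
  have hA0 : 0 ≤ A := intervalIntegral.integral_nonneg (by norm_num) (fun t _ => sq_nonneg _)
  have hB : (0:ℝ) < A + 1 := by linarith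
  set sB : ℝ := Real.sqrt (A + 1) with hsB
  have hsB0 : 0 < sB := Real.sqrt_pos.mpr hB
  have hBs : sB * sB = A + 1 := Real.mul_self_sqrt hB.le
  rcases eq_or_lt_of_le hx.1 with h0 | h0
  · rw [← h0]
    simp [Real.sqrt_nonneg, mul_nonneg, hsB0.le]
  · set ε : ℝ := Real.sqrt x / (2 * sB) with hε
    have hsx0 : 0 < Real.sqrt x := Real.sqrt_pos.mpr h0
    have hxs : Real.sqrt x * Real.sqrt x = x := Real.mul_self_sqrt hx.1
    have hε0 : 0 < ε := by positivity
    have hsub : uIcc (0:ℝ) x ⊆ uIcc (0:ℝ) 1 := by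
      rw [uIcc_of_le hx.1, uIcc01]
      exact Icc_subset_Icc le_rfl hx.2
    have hint1 : IntervalIntegrable (fun t => |u'' t|) volume 0 x :=
      (h2.abs).mono_set hsub
    have key : ∀ y : ℝ, |y| ≤ ε * y^2 + 1/(4*ε) := by
      intro y
      rw [← sub_le_iff_le_add', le_div_iff₀ (by positivity : (0:ℝ) < 4*ε)]
      rcases abs_cases y with ⟨h, _⟩ | ⟨h, _⟩ <;> rw [h] <;>
        nlinarith [sq_nonneg (2*ε*y - 1), sq_nonneg (2*ε*y + 1)]
    have step1 : (∫ t in (0:ℝ)..x, |u'' t|) ≤ ∫ t in (0:ℝ)..x, (ε * u'' t ^ 2 + 1/(4*ε)) := by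
      apply intervalIntegral.integral_mono_on hx.1 hint1
        (((h2sq.mono_set hsub).const_mul ε).add intervalIntegrable_const)
      intro t _
      exact key (u'' t)
    have step2 : (∫ t in (0:ℝ)..x, (ε * u'' t ^ 2 + 1/(4*ε)))
        = ε * (∫ t in (0:ℝ)..x, u'' t ^ 2) + x * (1/(4*ε)) := by
      rw [intervalIntegral.integral_add ((h2sq.mono_set hsub).const_mul ε) intervalIntegrable_const,
        intervalIntegral.integral_const_mul, intervalIntegral.integral_const, smul_eq_mul, sub_zero]
    have step3 : (∫ t in (0:ℝ)..x, u'' t ^ 2) ≤ A := by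
      apply intervalIntegral.integral_mono_interval le_rfl hx.1 hx.2
      · exact Filter.Eventually.of_forall (fun t => sq_nonneg _)
      · exact h2sq
    have e1 : x * (1/(4*ε)) = Real.sqrt x * sB / 2 := by
      rw [hε, ← hxs]; field_simp
      rw [Real.sqrt_sq (Real.sqrt_nonneg x)]; ring
    have e2 : ε * A ≤ Real.sqrt x * sB / 2 := by
      rw [hε, div_mul_eq_mul_div, div_le_div_iff₀ (by positivity) (by norm_num)]
      nlinarith [mul_le_mul_of_nonneg_left (show A ≤ A + 1 by linarith) hsx0.le]
    calc (∫ t in (0:ℝ)..x, |u'' t|) ≤ ε * (∫ t in (0:ℝ)..x, u'' t ^ 2) + x * (1/(4*ε)) := by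
          rw [← step2]; exact step1
      _ ≤ ε * A + x * (1/(4*ε)) := by nlinarith [hε0, step3]
      _ ≤ sB * Real.sqrt x := by rw [e1]; nlinarith [e2]

end OneSided

noncomputable def Cst (u'' : ℝ → ℝ) : ℝ := Real.sqrt ((∫ t in (0:ℝ)..1, u'' t ^ 2) + 1)

lemma Cst_nonneg (u'' : ℝ → ℝ) : 0 ≤ Cst u'' := Real.sqrt_nonneg _

section OneSided2
variable {u u' u'' : ℝ → ℝ}

lemma u'bound (h2 : IntervalIntegrable u'' volume 0 1)
    (h2sq : IntervalIntegrable (fun x => u'' x ^ 2) volume 0 1)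
    (hu' : ∀ x ∈ Icc (0:ℝ) 1, u' x = ∫ t in (0:ℝ)..x, u'' t) :
    ∀ x ∈ Icc (0:ℝ) 1, |u' x| ≤ Cst u'' * Real.sqrt x := by
  intro x hx
  rw [hu' x hx]
  calc |∫ t in (0:ℝ)..x, u'' t| ≤ ∫ t in (0:ℝ)..x, |u'' t| :=
        intervalIntegral.abs_integral_le_integral_abs hx.1
    _ ≤ Cst u'' * Real.sqrt x := absint_bound h2 h2sq x hx

lemma u'absint_bound (h2 : IntervalIntegrable u'' volume 0 1)
    (h2sq : IntervalIntegrable (fun x => u'' x ^ 2) volume 0 1)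
    (hu' : ∀ x ∈ Icc (0:ℝ) 1, u' x = ∫ t in (0:ℝ)..x, u'' t) :
    ∀ x ∈ Icc (0:ℝ) 1, (∫ t in (0:ℝ)..x, |u' t|) ≤ Cst u'' * x * Real.sqrt x := by
  intro x hx
  have hsub : uIcc (0:ℝ) x ⊆ uIcc (0:ℝ) 1 := by
    rw [uIcc_of_le hx.1, uIcc01]; exact Icc_subset_Icc le_rfl hx.2
  have h1 : (∫ t in (0:ℝ)..x, |u' t|) ≤ ∫ t in (0:ℝ)..x, Cst u'' * Real.sqrt x := by
    apply intervalIntegral.integral_mono_on hx.1 (((u'int h2 hu').abs).mono_set hsub)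
      intervalIntegrable_const
    intro t ht
    calc |u' t| ≤ Cst u'' * Real.sqrt t := u'bound h2 h2sq hu' t ⟨ht.1, ht.2.trans hx.2⟩
      _ ≤ Cst u'' * Real.sqrt x := by
          exact mul_le_mul_of_nonneg_left (Real.sqrt_le_sqrt ht.2) (Cst_nonneg u'')
  rw [intervalIntegral.integral_const, smul_eq_mul, sub_zero] at h1
  calc (∫ t in (0:ℝ)..x, |u' t|) ≤ x * (Cst u'' * Real.sqrt x) := h1
    _ = Cst u'' * x * Real.sqrt x := by ring

lemma ubound (h2 : IntervalIntegrable u'' volume 0 1)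
    (h2sq : IntervalIntegrable (fun x => u'' x ^ 2) volume 0 1)
    (hu' : ∀ x ∈ Icc (0:ℝ) 1, u' x = ∫ t in (0:ℝ)..x, u'' t)
    (hu : ∀ x ∈ Icc (0:ℝ) 1, u x = ∫ t in (0:ℝ)..x, u' t) :
    ∀ x ∈ Icc (0:ℝ) 1, |u x| ≤ Cst u'' * x * Real.sqrt x := by
  intro x hx
  rw [hu x hx]
  calc |∫ t in (0:ℝ)..x, u' t| ≤ ∫ t in (0:ℝ)..x, |u' t| :=
        intervalIntegral.abs_integral_le_integral_abs hx.1
    _ ≤ Cst u'' * x * Real.sqrt x := u'absint_bound h2 h2sq hu' x hx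

lemma ucont (h2 : IntervalIntegrable u'' volume 0 1)
    (hu' : ∀ x ∈ Icc (0:ℝ) 1, u' x = ∫ t in (0:ℝ)..x, u'' t)
    (hu : ∀ x ∈ Icc (0:ℝ) 1, u x = ∫ t in (0:ℝ)..x, u' t) :
    ContinuousOn u (Icc 0 1) := by
  have h := intervalIntegral.continuousOn_primitive_interval
    (a := (0:ℝ)) (b := (1:ℝ)) (f := u') (μ := volume) ?_
  · rw [uIcc01] at h
    exact h.congr fun x hx => (hu x hx)
  · rw [uIcc01]
    exact (intervalIntegrable_iff_integrableOn_Icc_of_le (by norm_num)).mp (u'int h2 hu')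

lemma uint (h2 : IntervalIntegrable u'' volume 0 1)
    (hu' : ∀ x ∈ Icc (0:ℝ) 1, u' x = ∫ t in (0:ℝ)..x, u'' t)
    (hu : ∀ x ∈ Icc (0:ℝ) 1, u x = ∫ t in (0:ℝ)..x, u' t) :
    IntervalIntegrable u volume 0 1 :=
  ContinuousOn.intervalIntegrable (by rw [uIcc01]; exact ucont h2 hu' hu)

lemma u'sqint (h2 : IntervalIntegrable u'' volume 0 1)
    (hu' : ∀ x ∈ Icc (0:ℝ) 1, u' x = ∫ t in (0:ℝ)..x, u'' t) :
    IntervalIntegrable (fun x => u' x ^ 2) volume 0 1 :=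
  ContinuousOn.intervalIntegrable (by rw [uIcc01]; exact (u'cont h2 hu').pow 2)

lemma LQ (h2 : IntervalIntegrable u'' volume 0 1)
    (h2sq : IntervalIntegrable (fun x => u'' x ^ 2) volume 0 1)
    (hu' : ∀ x ∈ Icc (0:ℝ) 1, u' x = ∫ t in (0:ℝ)..x, u'' t)
    (hu : ∀ x ∈ Icc (0:ℝ) 1, u x = ∫ t in (0:ℝ)..x, u' t) :
    ∫ x in (0:ℝ)..1, u'' x * u x = u' 1 * u 1 - ∫ x in (0:ℝ)..1, u' x ^ 2 := by
  have h01 : (0:ℝ) ≤ 1 := by norm_num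
  have e1 : ∫ x in (0:ℝ)..1, u'' x * u x
      = ∫ x in (0:ℝ)..1, u'' x * (∫ t in (0:ℝ)..x, u' t) := by
    rw [intervalIntegral.integral_of_le h01, intervalIntegral.integral_of_le h01]
    exact setIntegral_congr_fun measurableSet_Ioc
      (fun x hx => by rw [hu x (Ioc_subset_Icc_self hx)])
  have hbound : ∀ x ∈ Ioc (0:ℝ) 1, |u'' x| * (∫ t in (0:ℝ)..x, |u' t|) ≤ |u'' x| * Cst u'' := by
    intro x hx
    apply mul_le_mul_of_nonneg_left _ (abs_nonneg _)
    calc (∫ t in (0:ℝ)..x, |u' t|) ≤ Cst u'' * x * Real.sqrt x :=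
          u'absint_bound h2 h2sq hu' x (Ioc_subset_Icc_self hx)
      _ ≤ Cst u'' * 1 * 1 := by
          have hsx : Real.sqrt x ≤ 1 := by
            rw [show (1:ℝ) = Real.sqrt 1 by simp]
            exact Real.sqrt_le_sqrt hx.2
          have hC := Cst_nonneg u''
          have hx0 : 0 ≤ x := hx.1.le
          nlinarith [mul_le_mul_of_nonneg_left hsx (mul_nonneg hC hx0),
            mul_le_mul_of_nonneg_left hx.2 hC]
      _ = Cst u'' := by ring
  have hswap := swap_with_bound u'' u' (fun x => |u'' x| * Cst u'')
    h2.1.aestronglyMeasurable (u'int h2 hu').1 ((h2.abs.1).mul_const _) hbound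
  have e2 : ∫ t in (0:ℝ)..1, u' t * (∫ x in t..(1:ℝ), u'' x)
      = ∫ t in (0:ℝ)..1, (u' 1 * u' t - u' t ^ 2) := by
    rw [intervalIntegral.integral_of_le h01, intervalIntegral.integral_of_le h01]
    apply setIntegral_congr_fun measurableSet_Ioc
    intro t ht
    have hsub1 : uIcc (0:ℝ) t ⊆ uIcc (0:ℝ) 1 := by
      rw [uIcc_of_le ht.1.le, uIcc01]; exact Icc_subset_Icc le_rfl ht.2
    have hsub2 : uIcc t (1:ℝ) ⊆ uIcc (0:ℝ) 1 := by
      rw [uIcc_of_le ht.2, uIcc01]; exact Icc_subset_Icc ht.1.le le_rfl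
    have hadd := intervalIntegral.integral_add_adjacent_intervals
      (h2.mono_set hsub1) (h2.mono_set hsub2)
    have h1 : u' 1 = ∫ s in (0:ℝ)..1, u'' s := hu' 1 ⟨h01, le_rfl⟩
    have h2' : u' t = ∫ s in (0:ℝ)..t, u'' s := hu' t (Ioc_subset_Icc_self ht)
    have heq : ∫ x in t..(1:ℝ), u'' x = u' 1 - u' t := by rw [h1, h2']; linarith
    dsimp only
    rw [heq]; ring
  have e3 : ∫ t in (0:ℝ)..1, (u' 1 * u' t - u' t ^ 2)
      = u' 1 * u 1 - ∫ x in (0:ℝ)..1, u' x ^ 2 := by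
    rw [intervalIntegral.integral_sub ((u'int h2 hu').const_mul _) (u'sqint h2 hu'),
      intervalIntegral.integral_const_mul, ← hu 1 ⟨h01, le_rfl⟩]
  rw [e1, hswap, e2, e3]

end OneSided2

lemma ii_of_ion {f : ℝ → ℝ} (h : IntegrableOn f (Ioc 0 1) volume) :
    IntervalIntegrable f volume 0 1 :=
  (intervalIntegrable_iff_integrableOn_Ioc_of_le (by norm_num)).2 h

lemma rpow_aesm (e : ℝ) :
    AEStronglyMeasurable (fun x : ℝ => x ^ e) (volume.restrict (Ioc 0 1)) :=
  (ContinuousOn.rpow_const continuousOn_id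
    (fun x hx => Or.inl (ne_of_gt hx.1))).aestronglyMeasurable measurableSet_Ioc

lemma rpow_ion {e : ℝ} (he : -1 < e) : IntegrableOn (fun x : ℝ => x ^ e) (Ioc 0 1) volume :=
  (intervalIntegral.intervalIntegrable_rpow' he).1

lemma rpow_two_mul {x : ℝ} (hx : 0 ≤ x) (e : ℝ) : x ^ (2*e) = (x ^ e)^2 := by
  rw [show 2*e = e*2 by ring, Real.rpow_mul hx, ← Real.rpow_natCast (x^e) 2]
  norm_num

lemma zero_notin_uIcc {t : ℝ} (ht : t ∈ Ioc (0:ℝ) 1) : (0:ℝ) ∉ Set.uIcc t 1 := by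
  rw [uIcc_of_le ht.2]
  intro h
  exact absurd h.1 (not_le.mpr ht.1)

section OneSided3
variable {u u' u'' : ℝ → ℝ}

lemma atom_u''pow (h2 : IntervalIntegrable u'' volume 0 1)
    (h2sq : IntervalIntegrable (fun x => u'' x ^ 2) volume 0 1)
    {e : ℝ} (he : -(1/2) < e) :
    IntegrableOn (fun x => u'' x * x ^ e) (Ioc 0 1) volume := by
  refine Integrable.mono' (((h2sq.1).div_const 2).add ((rpow_ion (by linarith : (-1:ℝ) < 2*e)).div_const 2))
    (h2.1.aestronglyMeasurable.mul (rpow_aesm e)) ?_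
  rw [ae_restrict_iff' measurableSet_Ioc]
  refine Filter.Eventually.of_forall (fun x hx => ?_)
  have h1 : (0:ℝ) ≤ x ^ e := Real.rpow_nonneg hx.1.le e
  have h2' : x ^ (2*e) = (x ^ e)^2 := rpow_two_mul hx.1.le e
  simp only [Pi.add_apply]
  rw [Real.norm_eq_abs, abs_mul, abs_of_nonneg h1, h2']
  nlinarith [sq_nonneg (|u'' x| - x ^ e), sq_abs (u'' x)]

lemma atom_u'pow (h2 : IntervalIntegrable u'' volume 0 1)
    (h2sq : IntervalIntegrable (fun x => u'' x ^ 2) volume 0 1)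
    (hu' : ∀ x ∈ Icc (0:ℝ) 1, u' x = ∫ t in (0:ℝ)..x, u'' t)
    {e : ℝ} (he : -(3/2) < e) :
    IntegrableOn (fun x => x ^ e * u' x) (Ioc 0 1) volume := by
  refine Integrable.mono' ((rpow_ion (by linarith : (-1:ℝ) < e + 1/2)).const_mul (Cst u''))
    ((rpow_aesm e).mul (((u'cont h2 hu').mono Ioc_subset_Icc_self).aestronglyMeasurable
      measurableSet_Ioc)) ?_
  rw [ae_restrict_iff' measurableSet_Ioc]
  refine Filter.Eventually.of_forall (fun x hx => ?_)
  have h1 : (0:ℝ) ≤ x ^ e := Real.rpow_nonneg hx.1.le e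
  rw [Real.norm_eq_abs, abs_mul, abs_of_nonneg h1]
  calc x ^ e * |u' x| ≤ x ^ e * (Cst u'' * Real.sqrt x) :=
        mul_le_mul_of_nonneg_left (u'bound h2 h2sq hu' x (Ioc_subset_Icc_self hx)) h1
    _ = Cst u'' * x ^ (e + 1/2) := by
        rw [Real.sqrt_eq_rpow, Real.rpow_add hx.1]; ring

lemma atom_upow (h2 : IntervalIntegrable u'' volume 0 1)
    (h2sq : IntervalIntegrable (fun x => u'' x ^ 2) volume 0 1)
    (hu' : ∀ x ∈ Icc (0:ℝ) 1, u' x = ∫ t in (0:ℝ)..x, u'' t)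
    (hu : ∀ x ∈ Icc (0:ℝ) 1, u x = ∫ t in (0:ℝ)..x, u' t)
    {e : ℝ} (he : -(5/2) < e) :
    IntegrableOn (fun x => u x * x ^ e) (Ioc 0 1) volume := by
  refine Integrable.mono' ((rpow_ion (by linarith : (-1:ℝ) < e + 3/2)).const_mul (Cst u''))
    ((((ucont h2 hu' hu).mono Ioc_subset_Icc_self).aestronglyMeasurable
      measurableSet_Ioc).mul (rpow_aesm e)) ?_
  rw [ae_restrict_iff' measurableSet_Ioc]
  refine Filter.Eventually.of_forall (fun x hx => ?_)
  have h1 : (0:ℝ) ≤ x ^ e := Real.rpow_nonneg hx.1.le e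
  rw [Real.norm_eq_abs, abs_mul, abs_of_nonneg h1]
  calc |u x| * x ^ e ≤ (Cst u'' * x * Real.sqrt x) * x ^ e :=
        mul_le_mul_of_nonneg_right (ubound h2 h2sq hu' hu x (Ioc_subset_Icc_self hx)) h1
    _ = Cst u'' * x ^ (e + 3/2) := by
        rw [Real.sqrt_eq_rpow, show e + 3/2 = 1 + (1/2 + e) by ring,
          Real.rpow_add hx.1, Real.rpow_add hx.1, Real.rpow_one]; ring

lemma LP1 (h2 : IntervalIntegrable u'' volume 0 1)
    (h2sq : IntervalIntegrable (fun x => u'' x ^ 2) volume 0 1)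
    (hu' : ∀ x ∈ Icc (0:ℝ) 1, u' x = ∫ t in (0:ℝ)..x, u'' t)
    (hu : ∀ x ∈ Icc (0:ℝ) 1, u x = ∫ t in (0:ℝ)..x, u' t)
    {α : ℝ} (hα : -(1/2) < α) :
    ∫ x in (0:ℝ)..1, u'' x * x ^ α
      = u' 1 - α * ∫ x in (0:ℝ)..1, x ^ (α-1) * u' x := by
  have h01 : (0:ℝ) ≤ 1 := by norm_num
  by_cases hα0 : α = 0
  · subst hα0
    simp only [Real.rpow_zero, mul_one, zero_mul, sub_zero]
    rw [hu' 1 ⟨h01, le_rfl⟩]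
  · have hbound : ∀ x ∈ Ioc (0:ℝ) 1,
        |x ^ (α-1)| * (∫ t in (0:ℝ)..x, |u'' t|) ≤ Cst u'' * x ^ (α - 1/2) := by
      intro x hx
      have h1 : (0:ℝ) ≤ x ^ (α-1) := Real.rpow_nonneg hx.1.le _
      rw [abs_of_nonneg h1]
      calc x ^ (α-1) * (∫ t in (0:ℝ)..x, |u'' t|)
          ≤ x ^ (α-1) * (Cst u'' * Real.sqrt x) :=
            mul_le_mul_of_nonneg_left (absint_bound h2 h2sq x (Ioc_subset_Icc_self hx)) h1
        _ = Cst u'' * x ^ (α - 1/2) := by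
            rw [Real.sqrt_eq_rpow, show α - 1/2 = (α-1) + 1/2 by ring, Real.rpow_add hx.1]
            ring
    have hswap := swap_with_bound (fun x => x ^ (α-1)) u'' (fun x => Cst u'' * x ^ (α - 1/2))
      (rpow_aesm _) h2.1 ((rpow_ion (by linarith : (-1:ℝ) < α - 1/2)).const_mul _) hbound
    have e1 : ∫ x in (0:ℝ)..1, x ^ (α-1) * (∫ t in (0:ℝ)..x, u'' t)
        = ∫ x in (0:ℝ)..1, x ^ (α-1) * u' x := by
      rw [intervalIntegral.integral_of_le h01, intervalIntegral.integral_of_le h01]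
      exact setIntegral_congr_fun measurableSet_Ioc
        (fun x hx => by rw [← hu' x (Ioc_subset_Icc_self hx)])
    have e2 : ∫ t in (0:ℝ)..1, u'' t * (∫ x in t..(1:ℝ), x ^ (α-1))
        = ∫ t in (0:ℝ)..1, ((1/α) * u'' t - (1/α) * (u'' t * t ^ α)) := by
      rw [intervalIntegral.integral_of_le h01, intervalIntegral.integral_of_le h01]
      apply setIntegral_congr_fun measurableSet_Ioc
      intro t ht
      have hne : α - 1 ≠ -1 := by intro h; exact hα0 (by linarith)
      have hiv : ∫ x in t..(1:ℝ), x ^ (α-1) = (1 - t ^ α) / α := by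
        rw [integral_rpow (Or.inr ⟨hne, zero_notin_uIcc ht⟩),
          show α - 1 + 1 = α by ring, Real.one_rpow]
      dsimp only
      rw [hiv]
      ring
    have hint1 : IntervalIntegrable (fun t => (1/α) * u'' t) volume 0 1 := h2.const_mul _
    have hint2 : IntervalIntegrable (fun t => (1/α) * (u'' t * t ^ α)) volume 0 1 :=
      (ii_of_ion (atom_u''pow h2 h2sq hα)).const_mul _
    have e3 : ∫ t in (0:ℝ)..1, ((1/α) * u'' t - (1/α) * (u'' t * t ^ α))
        = (1/α) * u' 1 - (1/α) * ∫ t in (0:ℝ)..1, u'' t * t ^ α := by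
      rw [intervalIntegral.integral_sub hint1 hint2, intervalIntegral.integral_const_mul,
        intervalIntegral.integral_const_mul, ← hu' 1 ⟨h01, le_rfl⟩]
    rw [e1] at hswap
    rw [e2, e3] at hswap
    field_simp at hswap ⊢
    linarith

lemma LP2 (h2 : IntervalIntegrable u'' volume 0 1)
    (h2sq : IntervalIntegrable (fun x => u'' x ^ 2) volume 0 1)
    (hu' : ∀ x ∈ Icc (0:ℝ) 1, u' x = ∫ t in (0:ℝ)..x, u'' t)
    (hu : ∀ x ∈ Icc (0:ℝ) 1, u x = ∫ t in (0:ℝ)..x, u' t)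
    {α : ℝ} (hα : -(1/2) < α) (hα1 : α ≠ 1) :
    ∫ x in (0:ℝ)..1, u x * x ^ (α-2)
      = (u 1 - ∫ x in (0:ℝ)..1, x ^ (α-1) * u' x) / (α-1) := by
  have h01 : (0:ℝ) ≤ 1 := by norm_num
  have hbound : ∀ x ∈ Ioc (0:ℝ) 1,
      |x ^ (α-2)| * (∫ t in (0:ℝ)..x, |u' t|) ≤ Cst u'' * x ^ (α - 1/2) := by
    intro x hx
    have h1 : (0:ℝ) ≤ x ^ (α-2) := Real.rpow_nonneg hx.1.le _
    rw [abs_of_nonneg h1]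
    calc x ^ (α-2) * (∫ t in (0:ℝ)..x, |u' t|)
        ≤ x ^ (α-2) * (Cst u'' * x * Real.sqrt x) :=
          mul_le_mul_of_nonneg_left (u'absint_bound h2 h2sq hu' x (Ioc_subset_Icc_self hx)) h1
      _ = Cst u'' * x ^ (α - 1/2) := by
          rw [Real.sqrt_eq_rpow, show α - 1/2 = (α-2) + (1 + 1/2) by ring,
            Real.rpow_add hx.1, Real.rpow_add hx.1, Real.rpow_one]
          ring
  have hswap := swap_with_bound (fun x => x ^ (α-2)) u' (fun x => Cst u'' * x ^ (α - 1/2))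
    (rpow_aesm _) (u'int h2 hu').1 ((rpow_ion (by linarith : (-1:ℝ) < α - 1/2)).const_mul _) hbound
  have e1 : ∫ x in (0:ℝ)..1, x ^ (α-2) * (∫ t in (0:ℝ)..x, u' t)
      = ∫ x in (0:ℝ)..1, u x * x ^ (α-2) := by
    rw [intervalIntegral.integral_of_le h01, intervalIntegral.integral_of_le h01]
    exact setIntegral_congr_fun measurableSet_Ioc
      (fun x hx => by rw [← hu x (Ioc_subset_Icc_self hx)]; ring)
  have e2 : ∫ t in (0:ℝ)..1, u' t * (∫ x in t..(1:ℝ), x ^ (α-2))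
      = ∫ t in (0:ℝ)..1, ((1/(α-1)) * u' t - (1/(α-1)) * (t ^ (α-1) * u' t)) := by
    rw [intervalIntegral.integral_of_le h01, intervalIntegral.integral_of_le h01]
    apply setIntegral_congr_fun measurableSet_Ioc
    intro t ht
    have hne : α - 2 ≠ -1 := by intro h; exact hα1 (by linarith)
    have hiv : ∫ x in t..(1:ℝ), x ^ (α-2) = (1 - t ^ (α-1)) / (α-1) := by
      rw [integral_rpow (Or.inr ⟨hne, zero_notin_uIcc ht⟩),
        show α - 2 + 1 = α - 1 by ring, Real.one_rpow]
    dsimp only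
    rw [hiv]
    ring
  have hint1 : IntervalIntegrable (fun t => (1/(α-1)) * u' t) volume 0 1 :=
    (u'int h2 hu').const_mul _
  have hint2 : IntervalIntegrable (fun t => (1/(α-1)) * (t ^ (α-1) * u' t)) volume 0 1 :=
    (ii_of_ion (atom_u'pow h2 h2sq hu' (by linarith : -(3/2) < α - 1))).const_mul _
  have e3 : ∫ t in (0:ℝ)..1, ((1/(α-1)) * u' t - (1/(α-1)) * (t ^ (α-1) * u' t))
      = (1/(α-1)) * u 1 - (1/(α-1)) * ∫ t in (0:ℝ)..1, t ^ (α-1) * u' t := by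
    rw [intervalIntegral.integral_sub hint1 hint2, intervalIntegral.integral_const_mul,
      intervalIntegral.integral_const_mul, ← hu 1 ⟨h01, le_rfl⟩]
  rw [e1, e2, e3] at hswap
  have hne1 : α - 1 ≠ 0 := fun h => hα1 (by linarith)
  field_simp at hswap ⊢
  linarith

end OneSided3

section OneSided4
variable {u u' u'' : ℝ → ℝ}

lemma u_hasDerivAt (h2 : IntervalIntegrable u'' volume 0 1)
    (hu' : ∀ x ∈ Icc (0:ℝ) 1, u' x = ∫ t in (0:ℝ)..x, u'' t)
    (hu : ∀ x ∈ Icc (0:ℝ) 1, u x = ∫ t in (0:ℝ)..x, u' t) :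
    ∀ t ∈ Ioo (0:ℝ) 1, HasDerivAt u (u' t) t := by
  intro t ht
  have hmem : Icc (0:ℝ) 1 ∈ nhds t := Icc_mem_nhds ht.1 ht.2
  have hsub : uIcc (0:ℝ) t ⊆ uIcc (0:ℝ) 1 := by
    rw [uIcc_of_le ht.1.le, uIcc01]; exact Icc_subset_Icc le_rfl ht.2.le
  have hP : HasDerivAt (fun y => ∫ s in (0:ℝ)..y, u' s) (u' t) t := by
    refine intervalIntegral.integral_hasDerivAt_right ((u'int h2 hu').mono_set hsub)
      (ContinuousOn.stronglyMeasurableAtFilter isOpen_Ioo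
        ((u'cont h2 hu').mono Ioo_subset_Icc_self) t ht) ?_
    exact (u'cont h2 hu').continuousAt hmem
  exact hP.congr_of_eventuallyEq (Filter.eventuallyEq_of_mem hmem (fun y hy => hu y hy))

lemma usq_FTC (h2 : IntervalIntegrable u'' volume 0 1)
    (hu' : ∀ x ∈ Icc (0:ℝ) 1, u' x = ∫ t in (0:ℝ)..x, u'' t)
    (hu : ∀ x ∈ Icc (0:ℝ) 1, u x = ∫ t in (0:ℝ)..x, u' t) :
    ∀ x ∈ Icc (0:ℝ) 1, u x ^ 2 = ∫ t in (0:ℝ)..x, 2 * u t * u' t := by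
  intro x hx
  have hu0 : u 0 = 0 := by
    have := hu 0 ⟨le_rfl, by norm_num⟩
    simpa using this
  have hIccsub : Icc (0:ℝ) x ⊆ Icc 0 1 := Icc_subset_Icc le_rfl hx.2
  have hcont : ContinuousOn (fun y => u y ^ 2) (Icc 0 x) :=
    ((ucont h2 hu' hu).mono hIccsub).pow 2
  have hderiv : ∀ t ∈ Ioo (0:ℝ) x, HasDerivWithinAt (fun y => u y ^ 2)
      (2 * u t * u' t) (Ioi t) t := by
    intro t ht
    have ht1 : t ∈ Ioo (0:ℝ) 1 := ⟨ht.1, lt_of_lt_of_le ht.2 hx.2⟩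
    have h := (u_hasDerivAt h2 hu' hu t ht1).pow 2
    have : ((2:ℕ):ℝ) * u t ^ (2-1) * u' t = 2 * u t * u' t := by norm_num
    rw [this] at h
    exact h.hasDerivWithinAt
  have hint : IntervalIntegrable (fun t => 2 * u t * u' t) volume 0 x := by
    apply ContinuousOn.intervalIntegrable
    rw [uIcc_of_le hx.1]
    exact (continuousOn_const.mul ((ucont h2 hu' hu).mono hIccsub)).mul
      ((u'cont h2 hu').mono hIccsub)
  have := intervalIntegral.integral_eq_sub_of_hasDeriv_right_of_le hx.1 hcont hderiv hint
  rw [this, hu0]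
  ring

lemma usq_div_ion (h2 : IntervalIntegrable u'' volume 0 1)
    (h2sq : IntervalIntegrable (fun x => u'' x ^ 2) volume 0 1)
    (hu' : ∀ x ∈ Icc (0:ℝ) 1, u' x = ∫ t in (0:ℝ)..x, u'' t)
    (hu : ∀ x ∈ Icc (0:ℝ) 1, u x = ∫ t in (0:ℝ)..x, u' t) :
    IntegrableOn (fun x => u x ^ 2 / x ^ 2) (Ioc 0 1) volume := by
  refine Integrable.mono' ((continuous_id.integrableOn_Ioc).integrable.const_mul (Cst u'' ^ 2))
    (((((ucont h2 hu' hu).mono Ioc_subset_Icc_self).pow 2).div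
      ((continuous_pow 2).continuousOn) (fun x hx => pow_ne_zero 2 (ne_of_gt hx.1))).aestronglyMeasurable
      measurableSet_Ioc) ?_
  rw [ae_restrict_iff' measurableSet_Ioc]
  refine Filter.Eventually.of_forall (fun x hx => ?_)
  have hb := ubound h2 h2sq hu' hu x (Ioc_subset_Icc_self hx)
  have h2b := mul_self_le_mul_self (abs_nonneg (u x)) hb
  have hs := Real.mul_self_sqrt hx.1.le
  have hxx : (0:ℝ) < x ^ 2 := pow_pos hx.1 2
  rw [Real.norm_eq_abs, abs_of_nonneg (by positivity : (0:ℝ) ≤ u x ^ 2 / x ^ 2), div_le_iff₀ hxx]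
  have hC := Cst_nonneg u''
  simp only [id_eq]
  have hexp : Cst u'' * x * Real.sqrt x * (Cst u'' * x * Real.sqrt x)
      = Cst u'' ^ 2 * x ^ 2 * x := by
    linear_combination (Cst u'' ^ 2 * x ^ 2) * hs
  nlinarith [h2b, hexp, sq_abs (u x)]

lemma uu'div_ion (h2 : IntervalIntegrable u'' volume 0 1)
    (h2sq : IntervalIntegrable (fun x => u'' x ^ 2) volume 0 1)
    (hu' : ∀ x ∈ Icc (0:ℝ) 1, u' x = ∫ t in (0:ℝ)..x, u'' t)
    (hu : ∀ x ∈ Icc (0:ℝ) 1, u x = ∫ t in (0:ℝ)..x, u' t) :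
    IntegrableOn (fun x => 2 * u x * u' x / x) (Ioc 0 1) volume := by
  refine Integrable.mono' ((continuous_id.integrableOn_Ioc).integrable.const_mul (2 * Cst u'' ^ 2))
    ((((continuousOn_const.mul ((ucont h2 hu' hu).mono Ioc_subset_Icc_self)).mul
      ((u'cont h2 hu').mono Ioc_subset_Icc_self)).div
      continuousOn_id (fun x hx => ne_of_gt hx.1)).aestronglyMeasurable
      measurableSet_Ioc ) ?_
  rw [ae_restrict_iff' measurableSet_Ioc]
  refine Filter.Eventually.of_forall (fun x hx => ?_)
  have hbu := ubound h2 h2sq hu' hu x (Ioc_subset_Icc_self hx)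
  have hbu' := u'bound h2 h2sq hu' x (Ioc_subset_Icc_self hx)
  have hs := Real.mul_self_sqrt hx.1.le
  have hC := Cst_nonneg u''
  have habs : |2 * u x * u' x / x| = 2 * |u x| * |u' x| / x := by
    rw [abs_div, abs_of_pos hx.1, abs_mul, abs_mul]
    norm_num
  rw [Real.norm_eq_abs, habs, div_le_iff₀ hx.1]
  have hprod := mul_le_mul hbu hbu' (abs_nonneg _)
    (mul_nonneg (mul_nonneg hC hx.1.le) (Real.sqrt_nonneg x))
  simp only [id_eq]
  have hexp : Cst u'' * x * Real.sqrt x * (Cst u'' * Real.sqrt x)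
      = Cst u'' ^ 2 * x * x := by
    linear_combination (Cst u'' ^ 2 * x) * hs
  nlinarith [hprod, hexp]

lemma LHardy (h2 : IntervalIntegrable u'' volume 0 1)
    (h2sq : IntervalIntegrable (fun x => u'' x ^ 2) volume 0 1)
    (hu' : ∀ x ∈ Icc (0:ℝ) 1, u' x = ∫ t in (0:ℝ)..x, u'' t)
    (hu : ∀ x ∈ Icc (0:ℝ) 1, u x = ∫ t in (0:ℝ)..x, u' t) :
    (∫ x in (0:ℝ)..1, u x ^ 2 / x ^ 2) ≤ 4 * ∫ x in (0:ℝ)..1, u' x ^ 2 := by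
  have h01 : (0:ℝ) ≤ 1 := by norm_num
  set C := Cst u'' with hCdef
  have hC := Cst_nonneg u''
  have husq := usq_FTC h2 hu' hu
  -- bound for the swap
  have hbound : ∀ x ∈ Ioc (0:ℝ) 1,
      |x ^ (-2:ℝ)| * (∫ t in (0:ℝ)..x, |2 * u t * u' t|) ≤ 2 * C^2 * x := by
    intro x hx
    have h1 : (0:ℝ) ≤ x ^ (-2:ℝ) := Real.rpow_nonneg hx.1.le _
    have hstep : (∫ t in (0:ℝ)..x, |2 * u t * u' t|) ≤ 2 * C^2 * x^2 * x := by
      have hmono : (∫ t in (0:ℝ)..x, |2 * u t * u' t|)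
          ≤ ∫ t in (0:ℝ)..x, (2 * C^2 * x^2 : ℝ) := by
        apply intervalIntegral.integral_mono_on hx.1.le ?_ intervalIntegrable_const
        · intro t ht
          have htIcc : t ∈ Icc (0:ℝ) 1 := ⟨ht.1, ht.2.trans hx.2⟩
          have hbu := ubound h2 h2sq hu' hu t htIcc
          have hbu' := u'bound h2 h2sq hu' t htIcc
          have hs := Real.mul_self_sqrt ht.1
          have habs : |2 * u t * u' t| = 2 * |u t| * |u' t| := by
            rw [abs_mul, abs_mul]; norm_num
          rw [habs]
          have hprod := mul_le_mul hbu hbu' (abs_nonneg _)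
            (mul_nonneg (mul_nonneg hC ht.1) (Real.sqrt_nonneg t))
          have htx : t ≤ x := ht.2
          have ht0 : 0 ≤ t := ht.1
          have hexp : Cst u'' * t * Real.sqrt t * (Cst u'' * Real.sqrt t)
              = Cst u'' ^ 2 * t * t := by
            linear_combination (Cst u'' ^ 2 * t) * hs
          nlinarith [hprod, hexp, mul_self_le_mul_self ht0 htx, pow_two x,
            sq_nonneg (Cst u'')]
        · apply ContinuousOn.intervalIntegrable
          rw [uIcc_of_le hx.1.le]
          have hIccsub : Icc (0:ℝ) x ⊆ Icc 0 1 := Icc_subset_Icc le_rfl hx.2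
          exact ((continuousOn_const.mul ((ucont h2 hu' hu).mono hIccsub)).mul
            ((u'cont h2 hu').mono hIccsub)).abs
      rw [intervalIntegral.integral_const, smul_eq_mul, sub_zero] at hmono
      calc (∫ t in (0:ℝ)..x, |2 * u t * u' t|) ≤ x * (2 * C^2 * x^2) := hmono
        _ = 2 * C^2 * x^2 * x := by ring
    have hx2 : x ^ (-2:ℝ) = (x^2)⁻¹ := by
      rw [show (-2:ℝ) = -((2:ℕ):ℝ) by norm_num, Real.rpow_neg hx.1.le, Real.rpow_natCast]
    rw [abs_of_nonneg h1, hx2]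
    have hx2pos : (0:ℝ) < x^2 := pow_pos hx.1 2
    calc (x^2)⁻¹ * (∫ t in (0:ℝ)..x, |2 * u t * u' t|)
        ≤ (x^2)⁻¹ * (2 * C^2 * x^2 * x) :=
          mul_le_mul_of_nonneg_left hstep (inv_nonneg.mpr hx2pos.le)
      _ = 2 * C^2 * x := by
          linear_combination (2 * C^2 * x) * (mul_inv_cancel₀ (ne_of_gt hx2pos))
  have hφint : IntervalIntegrable (fun t => 2 * u t * u' t) volume 0 1 := by
    apply ContinuousOn.intervalIntegrable
    rw [uIcc01]
    exact ((continuousOn_const.mul (ucont h2 hu' hu)).mul (u'cont h2 hu'))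
  have hmaj : IntegrableOn (fun x : ℝ => 2 * C^2 * x) (Ioc 0 1) volume := by
    have hid : IntegrableOn (fun x : ℝ => x) (Ioc (0:ℝ) 1) volume :=
      continuous_id.integrableOn_Ioc
    exact hid.const_mul (2 * C^2)
  have hswap := swap_with_bound (fun x => x ^ (-2:ℝ)) (fun t => 2 * u t * u' t)
    (fun x => 2 * C^2 * x) (rpow_aesm _) hφint.1 hmaj hbound
  · -- LHS of swap equals H
    have e1 : ∫ x in (0:ℝ)..1, x ^ (-2:ℝ) * (∫ t in (0:ℝ)..x, 2 * u t * u' t)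
        = ∫ x in (0:ℝ)..1, u x ^ 2 / x ^ 2 := by
      rw [intervalIntegral.integral_of_le h01, intervalIntegral.integral_of_le h01]
      apply setIntegral_congr_fun measurableSet_Ioc
      intro x hx
      have hx2 : x ^ (-2:ℝ) = (x^2)⁻¹ := by
        rw [show (-2:ℝ) = -((2:ℕ):ℝ) by norm_num, Real.rpow_neg hx.1.le, Real.rpow_natCast]
      dsimp only
      rw [← husq x (Ioc_subset_Icc_self hx), hx2, div_eq_mul_inv, mul_comm]
    have e2 : ∫ t in (0:ℝ)..1, (2 * u t * u' t) * (∫ x in t..(1:ℝ), x ^ (-2:ℝ))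
        = ∫ t in (0:ℝ)..1, (2 * u t * u' t / t - 2 * u t * u' t) := by
      rw [intervalIntegral.integral_of_le h01, intervalIntegral.integral_of_le h01]
      apply setIntegral_congr_fun measurableSet_Ioc
      intro t ht
      have hiv : ∫ x in t..(1:ℝ), x ^ (-2:ℝ) = t⁻¹ - 1 := by
        rw [integral_rpow (Or.inr ⟨by norm_num, zero_notin_uIcc ht⟩)]
        norm_num [Real.rpow_neg_one]
        ring
      dsimp only
      rw [hiv]
      have htne : t ≠ 0 := ne_of_gt ht.1
      field_simp
    have hint1 : IntervalIntegrable (fun t => 2 * u t * u' t / t) volume 0 1 :=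
      ii_of_ion (uu'div_ion h2 h2sq hu' hu)
    have hint2 : IntervalIntegrable (fun t => 2 * u t * u' t) volume 0 1 := hφint
    have e3 : ∫ t in (0:ℝ)..1, (2 * u t * u' t / t - 2 * u t * u' t)
        = (∫ t in (0:ℝ)..1, 2 * u t * u' t / t) - u 1 ^ 2 := by
      rw [intervalIntegral.integral_sub hint1 hint2, husq 1 ⟨h01, le_rfl⟩]
    -- the key pointwise estimate
    have hkey : (∫ t in (0:ℝ)..1, 2 * u t * u' t / t)
        ≤ ∫ t in (0:ℝ)..1, ((1/2) * (u t ^ 2 / t ^ 2) + 2 * u' t ^ 2) := by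
      apply intervalIntegral.integral_mono_on h01 hint1
        (((ii_of_ion (usq_div_ion h2 h2sq hu' hu)).const_mul _).add
          ((u'sqint h2 hu').const_mul _))
      intro t ht
      rcases eq_or_lt_of_le ht.1 with h0 | h0
      · rw [← h0]
        simp
        positivity
      · have ha : u t ^ 2 / t ^ 2 = (u t / t)^2 := by rw [div_pow]
        have hb : 2 * u t * u' t / t = 2 * (u t / t) * u' t := by ring
        rw [ha, hb]
        nlinarith [sq_nonneg (u t / t - 2 * u' t)]
    have e4 : ∫ t in (0:ℝ)..1, ((1/2) * (u t ^ 2 / t ^ 2) + 2 * u' t ^ 2)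
        = (1/2) * (∫ x in (0:ℝ)..1, u x ^ 2 / x ^ 2) + 2 * ∫ x in (0:ℝ)..1, u' x ^ 2 := by
      rw [intervalIntegral.integral_add ((ii_of_ion (usq_div_ion h2 h2sq hu' hu)).const_mul _)
        ((u'sqint h2 hu').const_mul _), intervalIntegral.integral_const_mul,
        intervalIntegral.integral_const_mul]
    rw [e1, e2, e3] at hswap
    have hsq : 0 ≤ u 1 ^ 2 := sq_nonneg _
    have := hkey
    rw [e4] at this
    linarith [hswap, this]

end OneSided4

section OneSided5
variable {u u' u'' : ℝ → ℝ}

lemma combo (h2 : IntervalIntegrable u'' volume 0 1)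
    (h2sq : IntervalIntegrable (fun x => u'' x ^ 2) volume 0 1)
    (hu' : ∀ x ∈ Icc (0:ℝ) 1, u' x = ∫ t in (0:ℝ)..x, u'' t)
    (hu : ∀ x ∈ Icc (0:ℝ) 1, u x = ∫ t in (0:ℝ)..x, u' t)
    {ν : ℝ} (hν : ν ∈ Ioo (0:ℝ) 1) {α : ℝ}
    (hα : α = ν + 1/2 ∨ α = -ν + 1/2) :
    -(∫ x in (0:ℝ)..1, u'' x * x ^ α)
      + (ν^2 - 1/4) * (∫ x in (0:ℝ)..1, u x * x ^ (α-2))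
      = α * u 1 - u' 1 := by
  obtain ⟨hν0, hν1⟩ := hν
  have hc : ν^2 - 1/4 = α*(α-1) := by rcases hα with h | h <;> subst h <;> ring
  have hαlb : -(1/2) < α := by rcases hα with h | h <;> subst h <;> nlinarith
  by_cases hα1 : α = 1
  · have hc0 : ν^2 - 1/4 = 0 := by rw [hc, hα1]; ring
    rw [LP1 h2 h2sq hu' hu hαlb, hc0, hα1]
    have : ∫ x in (0:ℝ)..1, x ^ ((1:ℝ)-1) * u' x = u 1 := by
      rw [hu 1 ⟨by norm_num, le_rfl⟩]
      apply intervalIntegral.integral_congr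
      intro x hx
      simp [Real.rpow_zero]
    rw [this]
    ring
  · rw [LP1 h2 h2sq hu' hu hαlb, LP2 h2 h2sq hu' hu hαlb hα1, hc]
    have hne : α - 1 ≠ 0 := fun h => hα1 (by linarith)
    field_simp
    ring

lemma abs_rpow_contOn (e : ℝ) : ContinuousOn (fun x : ℝ => |x| ^ e) (Ioc (0:ℝ) 1) :=
  continuous_abs.continuousOn.rpow_const
    (fun x hx => Or.inl (abs_ne_zero.mpr (ne_of_gt hx.1)))

lemma W_ion (h2 : IntervalIntegrable u'' volume 0 1)
    (h2sq : IntervalIntegrable (fun x => u'' x ^ 2) volume 0 1)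
    (hu' : ∀ x ∈ Icc (0:ℝ) 1, u' x = ∫ t in (0:ℝ)..x, u'' t)
    (hu : ∀ x ∈ Icc (0:ℝ) 1, u x = ∫ t in (0:ℝ)..x, u' t)
    {ν : ℝ} (hν : ν ∈ Ioo (0:ℝ) 1) (γ A₁ A₂ : ℝ) (hγ : 0 < γ) :
    IntegrableOn (fun x => |x| ^ (2*γ)
      * (u x + (A₁ * |x| ^ (ν + 1/2) + A₂ * |x| ^ (-ν + 1/2))) ^ 2) (Ioc 0 1) volume := by
  obtain ⟨hν0, hν1⟩ := hν
  have husq : IntegrableOn (fun x => u x ^ 2) (Ioc (0:ℝ) 1) volume := by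
    refine ((ContinuousOn.intervalIntegrable ?_).1)
    rw [uIcc01]; exact (ucont h2 hu' hu).pow 2
  have hmaj : IntegrableOn (fun x : ℝ => 2 * u x ^ 2 + ((4*A₁^2) * x ^ (2*ν+1)
      + (4*A₂^2) * x ^ (-(2*ν)+1))) (Ioc 0 1) volume :=
    (husq.const_mul 2).add (((rpow_ion (by linarith)).const_mul _).add
      ((rpow_ion (by linarith)).const_mul _))
  refine Integrable.mono' hmaj ?_ ?_
  · exact ((abs_rpow_contOn (2*γ)).mul
      ((((ucont h2 hu' hu).mono Ioc_subset_Icc_self).add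
        ((continuousOn_const.mul (abs_rpow_contOn _)).add
          (continuousOn_const.mul (abs_rpow_contOn _)))).pow 2)).aestronglyMeasurable
      measurableSet_Ioc
  · rw [ae_restrict_iff' measurableSet_Ioc]
    refine Filter.Eventually.of_forall (fun x hx => ?_)
    have habs : |x| = x := abs_of_pos hx.1
    have hq1 : (0:ℝ) ≤ x ^ (ν+1/2) := Real.rpow_nonneg hx.1.le _
    have hq2 : (0:ℝ) ≤ x ^ (-ν+1/2) := Real.rpow_nonneg hx.1.le _
    have hw1 : x ^ (2*γ) ≤ 1 := Real.rpow_le_one hx.1.le hx.2 (by linarith)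
    have hw0 : (0:ℝ) ≤ x ^ (2*γ) := Real.rpow_nonneg hx.1.le _
    have hsq1 : x ^ (2*ν+1) = (x ^ (ν+1/2))^2 := by
      rw [show (2*ν+1 : ℝ) = 2*(ν+1/2) by ring, rpow_two_mul hx.1.le]
    have hsq2 : x ^ (-(2*ν)+1) = (x ^ (-ν+1/2))^2 := by
      rw [show (-(2*ν)+1 : ℝ) = 2*(-ν+1/2) by ring, rpow_two_mul hx.1.le]
    rw [habs, Real.norm_eq_abs, abs_of_nonneg (mul_nonneg hw0 (sq_nonneg _)), hsq1, hsq2]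
    have hsum : (u x + (A₁ * x ^ (ν+1/2) + A₂ * x ^ (-ν+1/2))) ^ 2
        ≤ 2 * u x ^ 2 + (4*A₁^2 * (x ^ (ν+1/2))^2 + 4*A₂^2 * (x ^ (-ν+1/2))^2) := by
      nlinarith [sq_nonneg (u x - A₁ * x ^ (ν+1/2) - A₂ * x ^ (-ν+1/2)),
        sq_nonneg (A₁ * x ^ (ν+1/2) - A₂ * x ^ (-ν+1/2))]
    calc x ^ (2*γ) * (u x + (A₁ * x ^ (ν+1/2) + A₂ * x ^ (-ν+1/2))) ^ 2
        ≤ 1 * (u x + (A₁ * x ^ (ν+1/2) + A₂ * x ^ (-ν+1/2))) ^ 2 :=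
          mul_le_mul_of_nonneg_right hw1 (sq_nonneg _)
      _ = (u x + (A₁ * x ^ (ν+1/2) + A₂ * x ^ (-ν+1/2))) ^ 2 := one_mul _
      _ ≤ 2 * u x ^ 2 + (4*A₁^2 * (x ^ (ν+1/2))^2 + 4*A₂^2 * (x ^ (-ν+1/2))^2) := hsum

end OneSided5

section OneSided6
variable {u u' u'' : ℝ → ℝ}

lemma one_sided_identity
    (h2 : IntervalIntegrable u'' volume 0 1)
    (h2sq : IntervalIntegrable (fun x => u'' x ^ 2) volume 0 1)
    (hu' : ∀ x ∈ Icc (0:ℝ) 1, u' x = ∫ t in (0:ℝ)..x, u'' t)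
    (hu : ∀ x ∈ Icc (0:ℝ) 1, u x = ∫ t in (0:ℝ)..x, u' t)
    {ν : ℝ} (hν : ν ∈ Ioo (0:ℝ) 1) (K γ A₁ A₂ : ℝ) (hγ : 0 < γ) :
    IntervalIntegrable (fun x =>
        (-(u'' x) + ((ν ^ 2 - 1/4) / x ^ 2) * u x
          + K * |x| ^ (2*γ) * (u x + (A₁ * |x| ^ (ν + 1/2) + A₂ * |x| ^ (-ν + 1/2))))
        * (u x + (A₁ * |x| ^ (ν + 1/2) + A₂ * |x| ^ (-ν + 1/2)))) volume 0 1
    ∧ ∫ x in (0:ℝ)..1,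
        (-(u'' x) + ((ν ^ 2 - 1/4) / x ^ 2) * u x
          + K * |x| ^ (2*γ) * (u x + (A₁ * |x| ^ (ν + 1/2) + A₂ * |x| ^ (-ν + 1/2))))
        * (u x + (A₁ * |x| ^ (ν + 1/2) + A₂ * |x| ^ (-ν + 1/2)))
      = (∫ x in (0:ℝ)..1, u' x ^ 2)
        + (ν ^ 2 - 1/4) * (∫ x in (0:ℝ)..1, u x ^ 2 / x ^ 2)
        + K * (∫ x in (0:ℝ)..1, |x| ^ (2*γ)
            * (u x + (A₁ * |x| ^ (ν + 1/2) + A₂ * |x| ^ (-ν + 1/2))) ^ 2)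
        - u' 1 * u 1 + A₁ * ((ν + 1/2) * u 1 - u' 1)
        + A₂ * ((-ν + 1/2) * u 1 - u' 1) := by
  obtain ⟨hν0, hν1⟩ := hν
  have h01 : (0:ℝ) ≤ 1 := by norm_num
  set c : ℝ := ν ^ 2 - 1/4 with hc
  set p1 : ℝ := ν + 1/2 with hp1
  set p2 : ℝ := -ν + 1/2 with hp2
  -- the seven atoms
  have i1 : IntervalIntegrable (fun x => u'' x * u x) volume 0 1 :=
    h2.mul_continuousOn (by rw [uIcc01]; exact ucont h2 hu' hu)
  have i2 : IntervalIntegrable (fun x => u'' x * x ^ p1) volume 0 1 :=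
    ii_of_ion (atom_u''pow h2 h2sq (by rw [hp1]; nlinarith))
  have i3 : IntervalIntegrable (fun x => u'' x * x ^ p2) volume 0 1 :=
    ii_of_ion (atom_u''pow h2 h2sq (by rw [hp2]; nlinarith))
  have i4 : IntervalIntegrable (fun x => u x ^ 2 / x ^ 2) volume 0 1 :=
    ii_of_ion (usq_div_ion h2 h2sq hu' hu)
  have i5 : IntervalIntegrable (fun x => u x * x ^ (p1 - 2)) volume 0 1 :=
    ii_of_ion (atom_upow h2 h2sq hu' hu (by rw [hp1]; nlinarith))
  have i6 : IntervalIntegrable (fun x => u x * x ^ (p2 - 2)) volume 0 1 :=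
    ii_of_ion (atom_upow h2 h2sq hu' hu (by rw [hp2]; nlinarith))
  have i7 : IntervalIntegrable (fun x => |x| ^ (2*γ)
      * (u x + (A₁ * |x| ^ p1 + A₂ * |x| ^ p2)) ^ 2) volume 0 1 :=
    ii_of_ion (W_ion h2 h2sq hu' hu ⟨hν0, hν1⟩ γ A₁ A₂ hγ)
  have j1 := i1.const_mul (-1 : ℝ)
  have j2 := i2.const_mul (-A₁)
  have j3 := i3.const_mul (-A₂)
  have j4 := i4.const_mul c
  have j5 := i5.const_mul (c*A₁)
  have j6 := i6.const_mul (c*A₂)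
  have j7 := i7.const_mul K
  -- the pointwise identity on Ioc 0 1
  have hFG : ∀ x ∈ Ioc (0:ℝ) 1,
      (-(u'' x) + (c / x ^ 2) * u x
          + K * |x| ^ (2*γ) * (u x + (A₁ * |x| ^ p1 + A₂ * |x| ^ p2)))
        * (u x + (A₁ * |x| ^ p1 + A₂ * |x| ^ p2))
      = (-1 : ℝ) * (u'' x * u x) + (-A₁) * (u'' x * x ^ p1) + (-A₂) * (u'' x * x ^ p2)
        + c * (u x ^ 2 / x ^ 2) + (c*A₁) * (u x * x ^ (p1 - 2)) + (c*A₂) * (u x * x ^ (p2 - 2))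
        + K * (|x| ^ (2*γ) * (u x + (A₁ * |x| ^ p1 + A₂ * |x| ^ p2)) ^ 2) := by
    intro x hx
    have hx0 : x ≠ 0 := ne_of_gt hx.1
    have habs : |x| = x := abs_of_pos hx.1
    have h2r : x ^ ((2:ℕ):ℝ) = x ^ (2:ℕ) := Real.rpow_natCast x 2
    have hr1 : x ^ (p1 - 2) = x ^ p1 / x ^ 2 := by
      rw [Real.rpow_sub hx.1, show ((2:ℝ)) = ((2:ℕ):ℝ) by norm_num, h2r]
    have hr2 : x ^ (p2 - 2) = x ^ p2 / x ^ 2 := by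
      rw [Real.rpow_sub hx.1, show ((2:ℝ)) = ((2:ℕ):ℝ) by norm_num, h2r]
    rw [habs, hr1, hr2]
    field_simp
    ring
  -- replace integrand
  have hGsum : IntervalIntegrable (fun x =>
      (-1 : ℝ) * (u'' x * u x) + (-A₁) * (u'' x * x ^ p1) + (-A₂) * (u'' x * x ^ p2)
        + c * (u x ^ 2 / x ^ 2) + (c*A₁) * (u x * x ^ (p1 - 2)) + (c*A₂) * (u x * x ^ (p2 - 2))
        + K * (|x| ^ (2*γ) * (u x + (A₁ * |x| ^ p1 + A₂ * |x| ^ p2)) ^ 2)) volume 0 1 :=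
    ((((((j1.add j2).add j3).add j4).add j5).add j6).add j7)
  have hFint : IntervalIntegrable (fun x =>
      (-(u'' x) + (c / x ^ 2) * u x
          + K * |x| ^ (2*γ) * (u x + (A₁ * |x| ^ p1 + A₂ * |x| ^ p2)))
        * (u x + (A₁ * |x| ^ p1 + A₂ * |x| ^ p2))) volume 0 1 := by
    rw [intervalIntegrable_iff_integrableOn_Ioc_of_le h01]
    refine (hGsum.1).congr ?_
    rw [Filter.EventuallyEq, ae_restrict_iff' measurableSet_Ioc]
    exact Filter.Eventually.of_forall (fun x hx => (hFG x hx).symm)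
  refine ⟨hFint, ?_⟩
  have e0 : ∫ x in (0:ℝ)..1,
      (-(u'' x) + (c / x ^ 2) * u x
          + K * |x| ^ (2*γ) * (u x + (A₁ * |x| ^ p1 + A₂ * |x| ^ p2)))
        * (u x + (A₁ * |x| ^ p1 + A₂ * |x| ^ p2))
      = ∫ x in (0:ℝ)..1,
      ((-1 : ℝ) * (u'' x * u x) + (-A₁) * (u'' x * x ^ p1) + (-A₂) * (u'' x * x ^ p2)
        + c * (u x ^ 2 / x ^ 2) + (c*A₁) * (u x * x ^ (p1 - 2)) + (c*A₂) * (u x * x ^ (p2 - 2))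
        + K * (|x| ^ (2*γ) * (u x + (A₁ * |x| ^ p1 + A₂ * |x| ^ p2)) ^ 2)) := by
    rw [intervalIntegral.integral_of_le h01, intervalIntegral.integral_of_le h01]
    exact setIntegral_congr_fun measurableSet_Ioc (fun x hx => hFG x hx)
  rw [e0,
    intervalIntegral.integral_add ((((((j1.add j2).add j3).add j4).add j5).add j6)) j7,
    intervalIntegral.integral_add (((((j1.add j2).add j3).add j4).add j5)) j6,
    intervalIntegral.integral_add ((((j1.add j2).add j3).add j4)) j5,
    intervalIntegral.integral_add (((j1.add j2).add j3)) j4,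
    intervalIntegral.integral_add ((j1.add j2)) j3,
    intervalIntegral.integral_add j1 j2]
  simp only [intervalIntegral.integral_const_mul]
  have hLQ := LQ h2 h2sq hu' hu
  have hcombo1 := combo h2 h2sq hu' hu ⟨hν0, hν1⟩ (Or.inl hp1)
  have hcombo2 := combo h2 h2sq hu' hu ⟨hν0, hν1⟩ (Or.inr hp2)
  linear_combination (-1 : ℝ) * hLQ + A₁ * hcombo1 + A₂ * hcombo2

end OneSided6

lemma final_ineq (ν k dr dl hr hl wr wl : ℝ)
    (hdr : 0 ≤ dr) (hdl : 0 ≤ dl) (hhr0 : 0 ≤ hr) (hhl0 : 0 ≤ hl)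
    (hhr : hr ≤ 4 * dr) (hhl : hl ≤ 4 * dl) :
    min 1 (4 * ν ^ 2) * (dl + dr) + k * (wl + wr)
      ≤ dr + dl + (ν ^ 2 - 1/4) * (hr + hl) + k * (wr + wl) := by
  have hm1 : min 1 (4 * ν ^ 2) ≤ 1 := min_le_left _ _
  have hm2 : min 1 (4 * ν ^ 2) ≤ 4 * ν ^ 2 := min_le_right _ _
  have hw : k * (wl + wr) = k * (wr + wl) := by ring
  rw [hw]
  rcases le_or_gt 0 (ν ^ 2 - 1/4) with hc0 | hc0
  · nlinarith [mul_le_mul_of_nonneg_right hm1 (add_nonneg hdl hdr),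
      mul_nonneg hc0 (add_nonneg hhr0 hhl0)]
  · have h4 : (ν ^ 2 - 1/4) * (4 * (dr + dl)) ≤ (ν ^ 2 - 1/4) * (hr + hl) := by
      apply mul_le_mul_of_nonpos_left _ hc0.le
      linarith
    nlinarith [mul_le_mul_of_nonneg_right hm2 (add_nonneg hdl hdr)]


/-- **Coercivity of the operator `A_n` on its domain `D(A)`.**
Let `ν ∈ (0,1)`, `c_ν := ν² - 1/4`, `γ > 0`, `n ∈ ℕ*`, and `f = f_r + f_s ∈ D(A)`:
the regular part `f_r` is `H²` on `[-1,1]` (encoded via the fundamental theorem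
of calculus) with vanishing Cauchy data at `0`; the singular part `f_s` is a
combination of `|x|^(ν+1/2)`, `|x|^(-ν+1/2)` on each side of `0` with
coefficients satisfying the transmission conditions; and `f(±1) = 0`.
With `A_n f := -f_r'' + (c_ν/x²) f_r + (nπ)² |x|^(2γ) f` and
`m_ν := min {1, 4ν²}`, we have
`∫₋₁¹ (A_n f) f ≥ m_ν ∫₋₁¹ f_r'² + (nπ)² ∫₋₁¹ |x|^(2γ) f²`. -/
theorem An_coercive
    (ν : ℝ) (hν : ν ∈ Set.Ioo (0:ℝ) 1)
    (γ : ℝ) (hγ : 0 < γ) (n : ℕ) (hn : 0 < n)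
    (fr fr' fr'' fs : ℝ → ℝ)
    (a₁ a₂ b₁ b₂ : ℝ)
    -- regular part : H² on [-1,1] with f_r(0) = f_r'(0) = 0
    (hfr''int : IntervalIntegrable fr'' volume (-1) 1)
    (hfr''sq : IntervalIntegrable (fun x => fr'' x ^ 2) volume (-1) 1)
    (hfrFTC : ∀ x ∈ Set.Icc (-1:ℝ) 1, fr x = fr (-1) + ∫ t in (-1:ℝ)..x, fr' t)
    (hfr'FTC : ∀ x ∈ Set.Icc (-1:ℝ) 1, fr' x = fr' (-1) + ∫ t in (-1:ℝ)..x, fr'' t)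
    (hfr0 : fr 0 = 0) (hfr'0 : fr' 0 = 0)
    -- singular part
    (hfsP : ∀ x ∈ Set.Ioc (0:ℝ) 1,
        fs x = a₁ * |x| ^ (ν + 1/2) + a₂ * |x| ^ (-ν + 1/2))
    (hfsM : ∀ x ∈ Set.Ico (-1:ℝ) 0,
        fs x = b₁ * |x| ^ (ν + 1/2) + b₂ * |x| ^ (-ν + 1/2))
    -- transmission conditions
    (hfT1 : b₁ + b₂ + a₁ + a₂ = 0)
    (hfT2 : (ν + 1/2) * b₁ + (-ν + 1/2) * b₂ = (ν + 1/2) * a₁ + (-ν + 1/2) * a₂)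
    -- Dirichlet boundary conditions at ±1
    (hf1 : fr 1 + fs 1 = 0) (hfm1 : fr (-1) + fs (-1) = 0) :
    min 1 (4 * ν ^ 2) * (∫ x in (-1:ℝ)..1, fr' x ^ 2)
      + ((n : ℝ) * π) ^ 2 * (∫ x in (-1:ℝ)..1, |x| ^ (2*γ) * (fr x + fs x) ^ 2)
    ≤ ∫ x in (-1:ℝ)..1,
        (-(fr'' x) + ((ν ^ 2 - 1/4) / x ^ 2) * fr x
          + ((n : ℝ) * π) ^ 2 * |x| ^ (2*γ) * (fr x + fs x)) * (fr x + fs x) := by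
  obtain ⟨hν0, hν1⟩ := hν
  have hm11 : (-1:ℝ) ≤ 1 := by norm_num
  have h01 : (0:ℝ) ≤ 1 := by norm_num
  set K : ℝ := ((n : ℝ) * π) ^ 2 with hK
  -- subinterval inclusions
  have hsubR : uIcc (0:ℝ) 1 ⊆ uIcc (-1:ℝ) 1 := by
    rw [uIcc01, uIcc_of_le hm11]; exact Icc_subset_Icc (by norm_num) le_rfl
  have hsubL : uIcc (-1:ℝ) 0 ⊆ uIcc (-1:ℝ) 1 := by
    rw [uIcc_of_le (by norm_num : (-1:ℝ) ≤ 0), uIcc_of_le hm11]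
    exact Icc_subset_Icc le_rfl (by norm_num)
  -- continuity of fr'
  have hfr'cont : ContinuousOn fr' (Icc (-1:ℝ) 1) := by
    have hion : IntegrableOn fr'' (uIcc (-1:ℝ) 1) volume := by
      rw [uIcc_of_le hm11]
      exact (intervalIntegrable_iff_integrableOn_Icc_of_le hm11).mp hfr''int
    have h := intervalIntegral.continuousOn_primitive_interval
      (a := (-1:ℝ)) (b := (1:ℝ)) (f := fr'') (μ := volume) hion
    rw [uIcc_of_le hm11] at h
    exact (continuousOn_const.add h).congr (fun x hx => hfr'FTC x hx)
  have hfr'int : IntervalIntegrable fr' volume (-1) 1 :=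
    ContinuousOn.intervalIntegrable (by rwa [uIcc_of_le hm11])
  -- canonical FTC centered at 0
  have hfr'c : ∀ x ∈ Icc (-1:ℝ) 1, fr' x = ∫ t in (0:ℝ)..x, fr'' t := by
    intro x hx
    have h0 : fr' 0 = fr' (-1) + ∫ t in (-1:ℝ)..0, fr'' t :=
      hfr'FTC 0 ⟨by norm_num, by norm_num⟩
    have hx' := hfr'FTC x hx
    have hadd : (∫ t in (-1:ℝ)..0, fr'' t) + ∫ t in (0:ℝ)..x, fr'' t
        = ∫ t in (-1:ℝ)..x, fr'' t :=
      intervalIntegral.integral_add_adjacent_intervals (hfr''int.mono_set hsubL)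
        (hfr''int.mono_set (by
          rw [uIcc_of_le hm11]
          rintro y hy
          rcases le_total 0 x with h | h
          · rw [uIcc_of_le h] at hy
            exact ⟨by linarith [hy.1], le_trans hy.2 hx.2⟩
          · rw [uIcc_of_ge h] at hy
            exact ⟨le_trans hx.1 hy.1, by linarith [hy.2]⟩))
    rw [hfr'0] at h0
    rw [hx', ← hadd]
    linarith
  have hfrc : ∀ x ∈ Icc (-1:ℝ) 1, fr x = ∫ t in (0:ℝ)..x, fr' t := by
    intro x hx
    have h0 : fr 0 = fr (-1) + ∫ t in (-1:ℝ)..0, fr' t :=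
      hfrFTC 0 ⟨by norm_num, by norm_num⟩
    have hx' := hfrFTC x hx
    have hadd : (∫ t in (-1:ℝ)..0, fr' t) + ∫ t in (0:ℝ)..x, fr' t
        = ∫ t in (-1:ℝ)..x, fr' t :=
      intervalIntegral.integral_add_adjacent_intervals (hfr'int.mono_set hsubL)
        (hfr'int.mono_set (by
          rw [uIcc_of_le hm11]
          rintro y hy
          rcases le_total 0 x with h | h
          · rw [uIcc_of_le h] at hy
            exact ⟨by linarith [hy.1], le_trans hy.2 hx.2⟩
          · rw [uIcc_of_ge h] at hy
            exact ⟨le_trans hx.1 hy.1, by linarith [hy.2]⟩))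
    rw [hfr0] at h0
    rw [hx', ← hadd]
    linarith
  -- right-side package
  have r2 : IntervalIntegrable fr'' volume 0 1 := hfr''int.mono_set hsubR
  have r2sq : IntervalIntegrable (fun x => fr'' x ^ 2) volume 0 1 := hfr''sq.mono_set hsubR
  have ru' : ∀ x ∈ Icc (0:ℝ) 1, fr' x = ∫ t in (0:ℝ)..x, fr'' t :=
    fun x hx => hfr'c x ⟨by linarith [hx.1], hx.2⟩
  have ru : ∀ x ∈ Icc (0:ℝ) 1, fr x = ∫ t in (0:ℝ)..x, fr' t :=
    fun x hx => hfrc x ⟨by linarith [hx.1], hx.2⟩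
  -- left-side (reflected) package
  set v : ℝ → ℝ := fun x => fr (-x) with hv
  set v' : ℝ → ℝ := fun x => -fr' (-x) with hv'
  set v'' : ℝ → ℝ := fun x => fr'' (-x) with hv''
  have l2 : IntervalIntegrable v'' volume 0 1 := by
    have h := (hfr''int.mono_set hsubL).symm
    have := (IntervalIntegrable.iff_comp_neg).mp h
    simpa [neg_zero] using this
  have l2sq : IntervalIntegrable (fun x => v'' x ^ 2) volume 0 1 := by
    have h := (hfr''sq.mono_set hsubL).symm
    have := (IntervalIntegrable.iff_comp_neg).mp h
    simpa [neg_zero] using this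
  have lv' : ∀ x ∈ Icc (0:ℝ) 1, v' x = ∫ t in (0:ℝ)..x, v'' t := by
    intro x hx
    have h := hfr'c (-x) ⟨by linarith [hx.2], by linarith [hx.1]⟩
    have hcn : (∫ t in (0:ℝ)..x, fr'' (-t)) = ∫ t in (-x)..(0:ℝ), fr'' t := by
      have := intervalIntegral.integral_comp_neg (a := (0:ℝ)) (b := x) (f := fr'')
      simpa [neg_zero] using this
    rw [hv']
    show -fr' (-x) = ∫ t in (0:ℝ)..x, v'' t
    rw [show (fun t => v'' t) = fun t => fr'' (-t) from rfl, hcn,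
      intervalIntegral.integral_symm, h]
  have lv : ∀ x ∈ Icc (0:ℝ) 1, v x = ∫ t in (0:ℝ)..x, v' t := by
    intro x hx
    have h := hfrc (-x) ⟨by linarith [hx.2], by linarith [hx.1]⟩
    have hcn : (∫ t in (0:ℝ)..x, fr' (-t)) = ∫ t in (-x)..(0:ℝ), fr' t := by
      have := intervalIntegral.integral_comp_neg (a := (0:ℝ)) (b := x) (f := fr')
      simpa [neg_zero] using this
    rw [hv]
    show fr (-x) = ∫ t in (0:ℝ)..x, v' t
    have : (∫ t in (0:ℝ)..x, v' t) = ∫ t in (0:ℝ)..x, -fr' (-t) := rfl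
    rw [this, intervalIntegral.integral_neg, hcn, intervalIntegral.integral_symm, h]
    ring
  -- apply the one-sided identity on both halves
  obtain ⟨hRint, hReq⟩ := one_sided_identity r2 r2sq ru' ru ⟨hν0, hν1⟩ K γ a₁ a₂ hγ
  obtain ⟨hLint, hLeq⟩ := one_sided_identity l2 l2sq lv' lv ⟨hν0, hν1⟩ K γ b₁ b₂ hγ
  set c : ℝ := ν ^ 2 - 1/4 with hc
  set DR := ∫ x in (0:ℝ)..1, fr' x ^ 2 with hDR
  set DL := ∫ x in (0:ℝ)..1, v' x ^ 2 with hDL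
  set HR := ∫ x in (0:ℝ)..1, fr x ^ 2 / x ^ 2 with hHR
  set HL := ∫ x in (0:ℝ)..1, v x ^ 2 / x ^ 2 with hHL
  set WR := ∫ x in (0:ℝ)..1, |x| ^ (2*γ)
      * (fr x + (a₁ * |x| ^ (ν + 1/2) + a₂ * |x| ^ (-ν + 1/2))) ^ 2 with hWR
  set WL := ∫ x in (0:ℝ)..1, |x| ^ (2*γ)
      * (v x + (b₁ * |x| ^ (ν + 1/2) + b₂ * |x| ^ (-ν + 1/2))) ^ 2 with hWL
  -- the full integrand
  set Φ : ℝ → ℝ := fun x =>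
      (-(fr'' x) + (c / x ^ 2) * fr x + K * |x| ^ (2*γ) * (fr x + fs x)) * (fr x + fs x)
    with hΦ
  -- pointwise identifications
  have hΦR_eq : ∀ x ∈ Ioc (0:ℝ) 1, Φ x
      = (-(fr'' x) + (c / x ^ 2) * fr x
          + K * |x| ^ (2*γ) * (fr x + (a₁ * |x| ^ (ν + 1/2) + a₂ * |x| ^ (-ν + 1/2))))
        * (fr x + (a₁ * |x| ^ (ν + 1/2) + a₂ * |x| ^ (-ν + 1/2))) := by
    intro x hx
    rw [hΦ]
    dsimp only
    rw [hfsP x hx]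
  have hΦL_eq : ∀ x ∈ Ioc (0:ℝ) 1, Φ (-x)
      = (-(v'' x) + (c / x ^ 2) * v x
          + K * |x| ^ (2*γ) * (v x + (b₁ * |x| ^ (ν + 1/2) + b₂ * |x| ^ (-ν + 1/2))))
        * (v x + (b₁ * |x| ^ (ν + 1/2) + b₂ * |x| ^ (-ν + 1/2))) := by
    intro x hx
    have hmem : -x ∈ Ico (-1:ℝ) 0 := ⟨by linarith [hx.2], by linarith [hx.1]⟩
    rw [hΦ]
    dsimp only
    rw [hfsM (-x) hmem, hv, hv'']
    dsimp only
    rw [abs_neg, neg_sq]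
  -- interval integrabilities of Φ on the two halves
  have hΦRint : IntervalIntegrable Φ volume 0 1 := by
    rw [intervalIntegrable_iff_integrableOn_Ioc_of_le h01]
    refine (hRint.1).congr ?_
    rw [Filter.EventuallyEq, ae_restrict_iff' measurableSet_Ioc]
    exact Filter.Eventually.of_forall (fun x hx => (hΦR_eq x hx).symm)
  have hΦnegint : IntervalIntegrable (fun x => Φ (-x)) volume 0 1 := by
    rw [intervalIntegrable_iff_integrableOn_Ioc_of_le h01]
    refine (hLint.1).congr ?_
    rw [Filter.EventuallyEq, ae_restrict_iff' measurableSet_Ioc]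
    exact Filter.Eventually.of_forall (fun x hx => (hΦL_eq x hx).symm)
  have hΦLint : IntervalIntegrable Φ volume (-1) 0 := by
    have h := (IntervalIntegrable.iff_comp_neg).mpr (by simpa [neg_zero, neg_neg] using hΦnegint :
      IntervalIntegrable (fun x => Φ (-x)) volume (-(0:ℝ)) (-(-1:ℝ)))
    exact h.symm
  -- integral conversions
  have hIR : ∫ x in (0:ℝ)..1, Φ x
      = DR + c * HR + K * WR - fr' 1 * fr 1
        + a₁ * ((ν + 1/2) * fr 1 - fr' 1) + a₂ * ((-ν + 1/2) * fr 1 - fr' 1) := by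
    rw [← hReq, intervalIntegral.integral_of_le h01, intervalIntegral.integral_of_le h01]
    exact setIntegral_congr_fun measurableSet_Ioc (fun x hx => hΦR_eq x hx)
  have hILneg : ∫ x in (0:ℝ)..1, Φ (-x)
      = DL + c * HL + K * WL - v' 1 * v 1
        + b₁ * ((ν + 1/2) * v 1 - v' 1) + b₂ * ((-ν + 1/2) * v 1 - v' 1) := by
    rw [← hLeq, intervalIntegral.integral_of_le h01, intervalIntegral.integral_of_le h01]
    exact setIntegral_congr_fun measurableSet_Ioc (fun x hx => hΦL_eq x hx)
  have hIL : ∫ x in (-1:ℝ)..0, Φ x = ∫ x in (0:ℝ)..1, Φ (-x) := by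
    have := intervalIntegral.integral_comp_neg (a := (0:ℝ)) (b := 1) (f := Φ)
    rw [neg_zero] at this
    exact this.symm
  have hsplitΦ : ∫ x in (-1:ℝ)..1, Φ x
      = (∫ x in (-1:ℝ)..0, Φ x) + ∫ x in (0:ℝ)..1, Φ x :=
    (intervalIntegral.integral_add_adjacent_intervals hΦLint hΦRint).symm
  -- LHS conversions : fr'²
  have hfr'sq_all : IntervalIntegrable (fun x => fr' x ^ 2) volume (-1) 1 :=
    ContinuousOn.intervalIntegrable (by rw [uIcc_of_le hm11]; exact hfr'cont.pow 2)
  have hDLconv : ∫ x in (-1:ℝ)..0, fr' x ^ 2 = DL := by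
    have h1 : (fun x => v' x ^ 2) = fun x => fr' (-x) ^ 2 := by
      funext x; rw [hv']; ring
    rw [hDL, h1]
    have := intervalIntegral.integral_comp_neg (a := (0:ℝ)) (b := 1) (f := fun x => fr' x ^ 2)
    rw [neg_zero] at this
    exact this.symm
  have hDtot : ∫ x in (-1:ℝ)..1, fr' x ^ 2 = DL + DR := by
    rw [← intervalIntegral.integral_add_adjacent_intervals
      (hfr'sq_all.mono_set hsubL) (hfr'sq_all.mono_set hsubR), hDLconv, hDR]
  -- LHS conversions : weighted term
  have hWgR_eq : ∀ x ∈ Ioc (0:ℝ) 1, |x| ^ (2*γ) * (fr x + fs x) ^ 2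
      = |x| ^ (2*γ) * (fr x + (a₁ * |x| ^ (ν + 1/2) + a₂ * |x| ^ (-ν + 1/2))) ^ 2 := by
    intro x hx
    rw [hfsP x hx]
  have hWgL_eq : ∀ x ∈ Ioc (0:ℝ) 1, |(-x)| ^ (2*γ) * (fr (-x) + fs (-x)) ^ 2
      = |x| ^ (2*γ) * (v x + (b₁ * |x| ^ (ν + 1/2) + b₂ * |x| ^ (-ν + 1/2))) ^ 2 := by
    intro x hx
    have hmem : -x ∈ Ico (-1:ℝ) 0 := ⟨by linarith [hx.2], by linarith [hx.1]⟩
    rw [hfsM (-x) hmem, hv]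
    dsimp only
    rw [abs_neg]
  have hWRii : IntervalIntegrable (fun x => |x| ^ (2*γ)
      * (fr x + (a₁ * |x| ^ (ν + 1/2) + a₂ * |x| ^ (-ν + 1/2))) ^ 2) volume 0 1 :=
    ii_of_ion (W_ion r2 r2sq ru' ru ⟨hν0, hν1⟩ γ a₁ a₂ hγ)
  have hWLii : IntervalIntegrable (fun x => |x| ^ (2*γ)
      * (v x + (b₁ * |x| ^ (ν + 1/2) + b₂ * |x| ^ (-ν + 1/2))) ^ 2) volume 0 1 :=
    ii_of_ion (W_ion l2 l2sq lv' lv ⟨hν0, hν1⟩ γ b₁ b₂ hγ)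
  have hWgRint : IntervalIntegrable (fun x => |x| ^ (2*γ) * (fr x + fs x) ^ 2) volume 0 1 := by
    rw [intervalIntegrable_iff_integrableOn_Ioc_of_le h01]
    refine (hWRii.1).congr ?_
    rw [Filter.EventuallyEq, ae_restrict_iff' measurableSet_Ioc]
    exact Filter.Eventually.of_forall (fun x hx => (hWgR_eq x hx).symm)
  have hWgnegint : IntervalIntegrable (fun x => |(-x)| ^ (2*γ) * (fr (-x) + fs (-x)) ^ 2)
      volume 0 1 := by
    rw [intervalIntegrable_iff_integrableOn_Ioc_of_le h01]
    refine (hWLii.1).congr ?_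
    rw [Filter.EventuallyEq, ae_restrict_iff' measurableSet_Ioc]
    exact Filter.Eventually.of_forall (fun x hx => (hWgL_eq x hx).symm)
  have hWgLint : IntervalIntegrable (fun x => |x| ^ (2*γ) * (fr x + fs x) ^ 2) volume (-1) 0 := by
    have h := IntervalIntegrable.iff_comp_neg
      (f := fun x : ℝ => |x| ^ (2*γ) * (fr x + fs x) ^ 2) (a := (0:ℝ)) (b := (-1:ℝ))
    have h2 : IntervalIntegrable (fun x : ℝ => |x| ^ (2*γ) * (fr x + fs x) ^ 2)
        volume 0 (-1) := by
      apply h.mpr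
      simp only [neg_zero, neg_neg]
      exact hWgnegint
    exact h2.symm
  have hWRconv : ∫ x in (0:ℝ)..1, |x| ^ (2*γ) * (fr x + fs x) ^ 2 = WR := by
    rw [hWR, intervalIntegral.integral_of_le h01, intervalIntegral.integral_of_le h01]
    exact setIntegral_congr_fun measurableSet_Ioc (fun x hx => hWgR_eq x hx)
  have hWLconv : ∫ x in (-1:ℝ)..0, |x| ^ (2*γ) * (fr x + fs x) ^ 2 = WL := by
    have h1 : ∫ x in (-1:ℝ)..0, |x| ^ (2*γ) * (fr x + fs x) ^ 2
        = ∫ x in (0:ℝ)..1, |(-x)| ^ (2*γ) * (fr (-x) + fs (-x)) ^ 2 := by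
      have := intervalIntegral.integral_comp_neg (a := (0:ℝ)) (b := 1)
        (f := fun x => |x| ^ (2*γ) * (fr x + fs x) ^ 2)
      rw [neg_zero] at this
      exact this.symm
    rw [h1, hWL, intervalIntegral.integral_of_le h01, intervalIntegral.integral_of_le h01]
    exact setIntegral_congr_fun measurableSet_Ioc (fun x hx => hWgL_eq x hx)
  have hWtot : ∫ x in (-1:ℝ)..1, |x| ^ (2*γ) * (fr x + fs x) ^ 2 = WL + WR := by
    rw [← intervalIntegral.integral_add_adjacent_intervals hWgLint hWgRint, hWLconv, hWRconv]
  -- boundary values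
  have hfs1 : fs 1 = a₁ + a₂ := by
    have := hfsP 1 ⟨by norm_num, le_rfl⟩
    simpa [Real.one_rpow] using this
  have hfsm1 : fs (-1) = b₁ + b₂ := by
    have := hfsM (-1) ⟨le_rfl, by norm_num⟩
    simpa [Real.one_rpow] using this
  have hfr1 : fr 1 = -(a₁ + a₂) := by rw [hfs1] at hf1; linarith
  have hfrm1 : fr (-1) = -(b₁ + b₂) := by rw [hfsm1] at hfm1; linarith
  have hv1 : v 1 = -(b₁ + b₂) := by rw [hv]; dsimp only; exact hfrm1
  have hv'1 : v' 1 = -fr' (-1) := by rw [hv']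
  -- boundary terms cancel
  have hbd : (- (fr' 1) * fr 1 + a₁ * ((ν + 1/2) * fr 1 - fr' 1)
        + a₂ * ((-ν + 1/2) * fr 1 - fr' 1))
      + (- (v' 1) * v 1 + b₁ * ((ν + 1/2) * v 1 - v' 1)
        + b₂ * ((-ν + 1/2) * v 1 - v' 1)) = 0 := by
    rw [hv1, hv'1, hfr1]
    linear_combination (-((ν + 1/2) * a₁ + (-ν + 1/2) * a₂)) * hfT1 + (-(b₁ + b₂)) * hfT2
  -- Hardy inequalities and positivity
  have hHR4 : HR ≤ 4 * DR := LHardy r2 r2sq ru' ru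
  have hHL4 : HL ≤ 4 * DL := LHardy l2 l2sq lv' lv
  have hHR0 : 0 ≤ HR := intervalIntegral.integral_nonneg h01 (fun x _ => by positivity)
  have hHL0 : 0 ≤ HL := intervalIntegral.integral_nonneg h01 (fun x _ => by positivity)
  have hDR0 : 0 ≤ DR := intervalIntegral.integral_nonneg h01 (fun x _ => sq_nonneg _)
  have hDL0 : 0 ≤ DL := intervalIntegral.integral_nonneg h01 (fun x _ => sq_nonneg _)
  -- final assembly
  have hRHS : ∫ x in (-1:ℝ)..1, Φ x = (DR + DL) + c * (HR + HL) + K * (WR + WL) := by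
    rw [hsplitΦ, hIL, hILneg, hIR]
    linear_combination hbd
  have hceq : c = ν ^ 2 - 1/4 := hc
  clear_value Φ WL WR HL HR DL DR v'' v' v c K
  rw [hDtot, hWtot, hRHS, hceq]
  exact final_ineq ν K DR DL HR HL WR WL hDR0 hDL0 hHR0 hHL0 hHR4 hHL4
end

section
/- Let ν ∈ (0,1), c_ν := ν² - 1/4, and let b ∈ (0,1) satisfy: b arbitrary in (0,1) if ν ∈ (0, 1/2], and b = 2 - 2ν if ν ∈ (1/2, 1). Let z : [0,1] → ℝ be of class H² (z, z' absolutely continuous, z'' square-integrable) with z(0) = z(1) = 0 and z'(0) = 0. Then the integrals ∫₀¹ x^(b-2) z'(x)² dx and ∫₀¹ x^(b-4) z(x)² dx are finite and 2b(1-b) ∫₀¹ x^(b-2) z'(x)² dx + (b/2)((b-1)(b-2)(b-3) - 4c_ν) ∫₀¹ x^(b-4) z(x)² dx ≥ 0. -/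
open MeasureTheory intervalIntegral

lemma cs_aux (f : ℝ → ℝ) (x : ℝ) (hx : 0 ≤ x)
    (hf : IntervalIntegrable f volume 0 x)
    (hf2 : IntervalIntegrable (fun t => f t ^ 2) volume 0 x) :
    (∫ t in (0:ℝ)..x, f t) ^ 2 ≤ x * ∫ t in (0:ℝ)..x, f t ^ 2 := by
  rcases eq_or_lt_of_le hx with h | hx0
  · simp [← h]
  · set c := (∫ t in (0:ℝ)..x, f t) / x with hc
    have key : 0 ≤ ∫ t in (0:ℝ)..x, (f t - c) ^ 2 :=
      intervalIntegral.integral_nonneg hx (fun t _ => sq_nonneg _)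
    have hexp : ∫ t in (0:ℝ)..x, (f t - c) ^ 2
        = (∫ t in (0:ℝ)..x, f t ^ 2) - 2*c*(∫ t in (0:ℝ)..x, f t) + c^2 * x := by
      have h1 : ∀ t, (f t - c) ^ 2 = f t ^ 2 - (2*c) * f t + c^2 := fun t => by ring
      simp_rw [h1]
      rw [intervalIntegral.integral_add (hf2.sub ((hf.const_mul (2*c))))
        intervalIntegrable_const,
        intervalIntegral.integral_sub hf2 (hf.const_mul (2*c)),
        intervalIntegral.integral_const_mul, intervalIntegral.integral_const]
      simp
      ring
    have hcx : (∫ t in (0:ℝ)..x, f t) = c * x := by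
      rw [hc]; field_simp
    rw [hexp, hcx] at key
    rw [hcx]
    nlinarith [sq_nonneg c]


set_option maxHeartbeats 1000000 in
/-- **Positivity of the singular-potential term in the Carleman estimate.**
Let `ν ∈ (0,1)`, `c_ν := ν² - 1/4`, and `b ∈ (0,1)` with `b = 2 - 2ν` whenever
`ν ∈ (1/2,1)`. If `z ∈ H²(0,1)` (i.e. `z`, `z'` absolutely continuous on `[0,1]`
and `z''` square-integrable, encoded via the fundamental theorem of calculus)
with `z 0 = z 1 = 0` and `z' 0 = 0`, then `∫₀¹ x^(b-2) z'(x)² dx` and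
`∫₀¹ x^(b-4) z(x)² dx` are finite and
`2b(1-b) ∫₀¹ x^(b-2) z'² + (b/2)((b-1)(b-2)(b-3) - 4c_ν) ∫₀¹ x^(b-4) z² ≥ 0`. -/
theorem carleman_singular_term_positivity
    (ν : ℝ) (hν : ν ∈ Set.Ioo (0:ℝ) 1)
    (b : ℝ) (hb : b ∈ Set.Ioo (0:ℝ) 1) (hbν : 1/2 < ν → b = 2 - 2*ν)
    (z z' z'' : ℝ → ℝ)
    (hz''int : IntervalIntegrable z'' volume 0 1)
    (hz''sq : IntervalIntegrable (fun x => z'' x ^ 2) volume 0 1)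
    (hzFTC : ∀ x ∈ Set.Icc (0:ℝ) 1, z x = z 0 + ∫ t in (0:ℝ)..x, z' t)
    (hz'FTC : ∀ x ∈ Set.Icc (0:ℝ) 1, z' x = z' 0 + ∫ t in (0:ℝ)..x, z'' t)
    (hz0 : z 0 = 0) (hz1 : z 1 = 0) (hz'0 : z' 0 = 0) :
    IntervalIntegrable (fun x => x ^ (b - 2) * z' x ^ 2) volume 0 1 ∧
    IntervalIntegrable (fun x => x ^ (b - 4) * z x ^ 2) volume 0 1 ∧
    0 ≤ 2*b*(1 - b) * (∫ x in (0:ℝ)..1, x ^ (b - 2) * z' x ^ 2)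
        + (b/2) * ((b - 1)*(b - 2)*(b - 3) - 4*(ν ^ 2 - 1/4))
            * (∫ x in (0:ℝ)..1, x ^ (b - 4) * z x ^ 2) := by
  obtain ⟨hν0, hν1⟩ := hν
  obtain ⟨hb0, hb1⟩ := hb
  have huIcc : Set.uIcc (0:ℝ) 1 = Set.Icc 0 1 := Set.uIcc_of_le zero_le_one
  have huIoc : Set.uIoc (0:ℝ) 1 = Set.Ioc 0 1 := Set.uIoc_of_le zero_le_one
  -- `z'` is continuous on `[0,1]`
  have hz'cont : ContinuousOn z' (Set.Icc 0 1) := by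
    have h1 : ContinuousOn (fun x => z' 0 + ∫ t in (0:ℝ)..x, z'' t) (Set.Icc 0 1) := by
      apply continuousOn_const.add
      have h2 := intervalIntegral.continuousOn_primitive_interval (μ := volume)
        (f := z'') (a := 0) (b := 1) ?_
      · rwa [huIcc] at h2
      · rw [huIcc]
        exact (intervalIntegrable_iff_integrableOn_Icc_of_le zero_le_one).mp hz''int
    exact h1.congr hz'FTC
  have hz'int : IntervalIntegrable z' volume 0 1 := by
    apply ContinuousOn.intervalIntegrable; rwa [huIcc]
  -- `z` is continuous on `[0,1]`
  have hzcont : ContinuousOn z (Set.Icc 0 1) := by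
    have h1 : ContinuousOn (fun x => z 0 + ∫ t in (0:ℝ)..x, z' t) (Set.Icc 0 1) := by
      apply continuousOn_const.add
      have h2 := intervalIntegral.continuousOn_primitive_interval (μ := volume)
        (f := z') (a := 0) (b := 1) ?_
      · rwa [huIcc] at h2
      · rw [huIcc]
        exact (intervalIntegrable_iff_integrableOn_Icc_of_le zero_le_one).mp hz'int
    exact h1.congr hzFTC
  set M := ∫ t in (0:ℝ)..1, z'' t ^ 2 with hMdef
  have hM0 : 0 ≤ M := intervalIntegral.integral_nonneg zero_le_one (fun t _ => sq_nonneg _)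
  -- pointwise bound on z'
  have hz'bd : ∀ x ∈ Set.Icc (0:ℝ) 1, z' x ^ 2 ≤ M * x := by
    intro x hx
    have hsub : Set.uIcc (0:ℝ) x ⊆ Set.uIcc (0:ℝ) 1 := by
      rw [huIcc, Set.uIcc_of_le hx.1]; exact Set.Icc_subset_Icc le_rfl hx.2
    have h1 : IntervalIntegrable z'' volume 0 x := hz''int.mono_set hsub
    have h2 : IntervalIntegrable (fun t => z'' t ^ 2) volume 0 x := hz''sq.mono_set hsub
    have hcs := cs_aux z'' x hx.1 h1 h2
    have hz'x : z' x = ∫ t in (0:ℝ)..x, z'' t := by rw [hz'FTC x hx, hz'0, zero_add]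
    have hmono : (∫ t in (0:ℝ)..x, z'' t ^ 2) ≤ M :=
      intervalIntegral.integral_mono_interval le_rfl hx.1 hx.2
        (Filter.Eventually.of_forall (fun t => sq_nonneg _)) hz''sq
    rw [hz'x]
    calc (∫ t in (0:ℝ)..x, z'' t) ^ 2 ≤ x * ∫ t in (0:ℝ)..x, z'' t ^ 2 := hcs
      _ ≤ x * M := by apply mul_le_mul_of_nonneg_left hmono hx.1
      _ = M * x := mul_comm _ _
  -- pointwise bound on z
  have hzbd : ∀ x ∈ Set.Icc (0:ℝ) 1, z x ^ 2 ≤ M * x ^ 3 := by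
    intro x hx
    have hsub : Set.uIcc (0:ℝ) x ⊆ Set.uIcc (0:ℝ) 1 := by
      rw [huIcc, Set.uIcc_of_le hx.1]; exact Set.Icc_subset_Icc le_rfl hx.2
    have hIccsub : Set.Icc (0:ℝ) x ⊆ Set.Icc 0 1 := Set.Icc_subset_Icc le_rfl hx.2
    have h1 : IntervalIntegrable z' volume 0 x := hz'int.mono_set hsub
    have h2 : IntervalIntegrable (fun t => z' t ^ 2) volume 0 x := by
      apply ContinuousOn.intervalIntegrable
      rw [Set.uIcc_of_le hx.1]
      exact ((hz'cont.mono hIccsub).pow 2)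
    have hcs := cs_aux z' x hx.1 h1 h2
    have hzx : z x = ∫ t in (0:ℝ)..x, z' t := by rw [hzFTC x hx, hz0, zero_add]
    have hmono : (∫ t in (0:ℝ)..x, z' t ^ 2) ≤ ∫ t in (0:ℝ)..x, M * t := by
      apply intervalIntegral.integral_mono_on hx.1 h2
        (intervalIntegral.intervalIntegrable_id.const_mul M)
      intro t ht
      exact hz'bd t (hIccsub ht)
    have hval : (∫ t in (0:ℝ)..x, M * t) = M * (x^2/2) := by
      rw [intervalIntegral.integral_const_mul, integral_id]; ring
    rw [hzx]
    calc (∫ t in (0:ℝ)..x, z' t) ^ 2 ≤ x * ∫ t in (0:ℝ)..x, z' t ^ 2 := hcs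
      _ ≤ x * (M * (x^2/2)) := by
          apply mul_le_mul_of_nonneg_left (hmono.trans_eq hval) hx.1
      _ ≤ M * x ^ 3 := by nlinarith [hx.1, pow_nonneg hx.1 3]
  -- domination criterion for interval integrability
  have hdom : ∀ (f : ℝ → ℝ), ContinuousOn f (Set.Ioc 0 1) →
      (∀ x ∈ Set.Ioc (0:ℝ) 1, |f x| ≤ 5*M * x ^ (b-1)) →
      IntervalIntegrable f volume 0 1 := by
    intro f hc hbd
    rw [intervalIntegrable_iff, huIoc]
    have hg : IntegrableOn (fun x : ℝ => 5*M * x ^ (b-1)) (Set.Ioc 0 1) := by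
      have h1 := (intervalIntegral.intervalIntegrable_rpow'
        (show (-1:ℝ) < b-1 by linarith) (a := 0) (b := 1)).const_mul (5*M)
      rwa [intervalIntegrable_iff, huIoc] at h1
    apply MeasureTheory.Integrable.mono hg (hc.aestronglyMeasurable measurableSet_Ioc)
    rw [ae_restrict_iff' measurableSet_Ioc]
    refine Filter.Eventually.of_forall (fun x hx => ?_)
    rw [Real.norm_eq_abs, Real.norm_eq_abs]
    exact (hbd x hx).trans (le_abs_self _)
  have hIocIcc : Set.Ioc (0:ℝ) 1 ⊆ Set.Icc 0 1 := Set.Ioc_subset_Icc_self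
  have hrpowc : ∀ r : ℝ, ContinuousOn (fun x : ℝ => x ^ r) (Set.Ioc 0 1) := fun r x hx =>
    (Real.continuousAt_rpow_const x r (Or.inl hx.1.ne')).continuousWithinAt
  have hMx : ∀ x : ℝ, 0 < x → 0 ≤ M * x ^ (b-1) := fun x hx =>
    mul_nonneg hM0 (Real.rpow_nonneg hx.le _)
  have hM5 : ∀ x : ℝ, 0 < x → M * x ^ (b-1) ≤ 5*M * x ^ (b-1) := fun x hx => by
    nlinarith [hMx x hx]
  -- bound for z z'
  have hzz' : ∀ x ∈ Set.Icc (0:ℝ) 1, |z x * z' x| ≤ M * x ^ 2 := by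
    intro x hx
    have h1 := hzbd x hx
    have h2 := hz'bd x hx
    have h3 : (z x * z' x)^2 ≤ (M * x^2)^2 := by nlinarith [sq_nonneg (z x), sq_nonneg (z' x), hx.1, pow_nonneg hx.1 3, pow_nonneg hx.1 4, hM0]
    calc |z x * z' x| = Real.sqrt ((z x * z' x)^2) := (Real.sqrt_sq_eq_abs _).symm
      _ ≤ Real.sqrt ((M * x^2)^2) := Real.sqrt_le_sqrt h3
      _ = |M * x^2| := Real.sqrt_sq_eq_abs _
      _ = M * x^2 := abs_of_nonneg (mul_nonneg hM0 (sq_nonneg _))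
  -- integrability of the three integrands
  have hf1 : IntervalIntegrable (fun x => x ^ (b-2) * z' x ^ 2) volume 0 1 := by
    apply hdom _ ((hrpowc _).mul ((hz'cont.mono hIocIcc).pow 2))
    intro x hx
    have hx0 : (0:ℝ) < x := hx.1
    show |x ^ (b-2) * z' x ^ 2| ≤ _
    rw [abs_of_nonneg (mul_nonneg (Real.rpow_nonneg hx0.le _) (sq_nonneg _))]
    calc x^(b-2) * z' x^2 ≤ x^(b-2) * (M*x) :=
          mul_le_mul_of_nonneg_left (hz'bd x (hIocIcc hx)) (Real.rpow_nonneg hx0.le _)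
      _ = M * x^(b-1) := by
          rw [show b-1 = (b-2)+1 by ring, Real.rpow_add_one hx0.ne']; ring
      _ ≤ 5*M * x^(b-1) := hM5 x hx0
  have hf2 : IntervalIntegrable (fun x => x ^ (b-4) * z x ^ 2) volume 0 1 := by
    apply hdom _ ((hrpowc _).mul ((hzcont.mono hIocIcc).pow 2))
    intro x hx
    have hx0 : (0:ℝ) < x := hx.1
    show |x ^ (b-4) * z x ^ 2| ≤ _
    rw [abs_of_nonneg (mul_nonneg (Real.rpow_nonneg hx0.le _) (sq_nonneg _))]
    calc x^(b-4) * z x^2 ≤ x^(b-4) * (M*x^3) :=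
          mul_le_mul_of_nonneg_left (hzbd x (hIocIcc hx)) (Real.rpow_nonneg hx0.le _)
      _ = M * x^(b-1) := by
          rw [show (x:ℝ)^(3:ℕ) = x^((3:ℕ):ℝ) from (Real.rpow_natCast x 3).symm,
            mul_comm M _, ← mul_assoc, ← Real.rpow_add hx0,
            show b - 4 + ((3:ℕ):ℝ) = b - 1 by push_cast; ring]
          ring
      _ ≤ 5*M * x^(b-1) := hM5 x hx0
  have hf3 : IntervalIntegrable (fun x => x ^ (b-3) * (z x * z' x)) volume 0 1 := by
    apply hdom _ ((hrpowc _).mul ((hzcont.mono hIocIcc).mul (hz'cont.mono hIocIcc)))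
    intro x hx
    have hx0 : (0:ℝ) < x := hx.1
    show |x ^ (b-3) * (z x * z' x)| ≤ _
    rw [abs_mul, abs_of_nonneg (Real.rpow_nonneg hx0.le (b-3))]
    calc x^(b-3) * |z x * z' x| ≤ x^(b-3) * (M*x^2) :=
          mul_le_mul_of_nonneg_left (hzz' x (hIocIcc hx)) (Real.rpow_nonneg hx0.le _)
      _ = M * x^(b-1) := by
          rw [show (x:ℝ)^(2:ℕ) = x^((2:ℕ):ℝ) from (Real.rpow_natCast x 2).symm,
            mul_comm M _, ← mul_assoc, ← Real.rpow_add hx0,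
            show b - 3 + ((2:ℕ):ℝ) = b - 1 by push_cast; ring]
          ring
      _ ≤ 5*M * x^(b-1) := hM5 x hx0
  -- z has derivative z' on (0,1)
  have hzderiv : ∀ x ∈ Set.Ioo (0:ℝ) 1, HasDerivAt z (z' x) x := by
    intro x hx
    have hmem : Set.Icc (0:ℝ) 1 ∈ nhds x := Icc_mem_nhds hx.1 hx.2
    have hca : ContinuousAt z' x := hz'cont.continuousAt hmem
    have hmeas : StronglyMeasurableAtFilter z' (nhds x) volume :=
      ⟨Set.Icc 0 1, hmem, hz'cont.aestronglyMeasurable measurableSet_Icc⟩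
    have hsub : Set.uIcc (0:ℝ) x ⊆ Set.uIcc (0:ℝ) 1 := by
      rw [huIcc, Set.uIcc_of_le hx.1.le]; exact Set.Icc_subset_Icc le_rfl hx.2.le
    have hprim : HasDerivAt (fun u => ∫ t in (0:ℝ)..u, z' t) (z' x) x :=
      intervalIntegral.integral_hasDerivAt_right (hz'int.mono_set hsub) hmeas hca
    apply hprim.congr_of_eventuallyEq
    filter_upwards [hmem] with u hu
    rw [hzFTC u hu, hz0, zero_add]
  set g : ℝ → ℝ := fun x => x^(b-3) * z x^2 with hgdef
  set gd : ℝ → ℝ := fun x => (b-3)*(x^(b-4) * z x^2) + 2*(x^(b-3) * (z x * z' x)) with hgddef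
  have hgderiv : ∀ x ∈ Set.Ioo (0:ℝ) 1, HasDerivAt g (gd x) x := by
    intro x hx
    have h1 : HasDerivAt (fun y : ℝ => y ^ (b-3)) ((b-3) * x ^ (b-3-1)) x :=
      Real.hasDerivAt_rpow_const (Or.inl hx.1.ne')
    have h2 : HasDerivAt (fun y => z y ^ 2) ((2:ℕ) * z x ^ (2-1) * z' x) x := (hzderiv x hx).pow 2
    have h3 : HasDerivAt (fun y => y ^ (b-3) * z y ^ 2) _ x := h1.mul h2
    rw [show b-3-1 = b-4 by ring] at h3
    convert h3 using 1
    push_cast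
    ring
  -- integrability of gd
  have hgdint : IntervalIntegrable gd volume 0 1 :=
    (hf2.const_mul (b-3)).add (hf3.const_mul 2)
  -- integration by parts identity on [ε,1]
  have hIBP : ∀ ε ∈ Set.Ioo (0:ℝ) 1, (∫ x in ε..1, gd x) = - g ε := by
    intro ε hε
    have hgc : ContinuousOn g (Set.Icc ε 1) := by
      apply ContinuousOn.mul
      · intro x hx
        exact (Real.continuousAt_rpow_const x _
          (Or.inl (lt_of_lt_of_le hε.1 hx.1).ne')).continuousWithinAt
      · exact (hzcont.mono (Set.Icc_subset_Icc hε.1.le le_rfl)).pow 2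
    have hgdc : ContinuousOn gd (Set.Icc ε 1) := by
      have hsub : Set.Icc ε 1 ⊆ Set.Ioc 0 1 := fun x hx => ⟨lt_of_lt_of_le hε.1 hx.1, hx.2⟩
      apply ContinuousOn.add
      · exact continuousOn_const.mul (((hrpowc _).mono hsub).mul
          ((hzcont.mono (hsub.trans hIocIcc)).pow 2))
      · exact continuousOn_const.mul (((hrpowc _).mono hsub).mul
          ((hzcont.mono (hsub.trans hIocIcc)).mul (hz'cont.mono (hsub.trans hIocIcc))))
    have h1 : (∫ x in ε..1, gd x) = g 1 - g ε := by
      apply intervalIntegral.integral_eq_sub_of_hasDeriv_right_of_le hε.2.le hgc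
      · intro x hx
        exact (hgderiv x ⟨lt_trans hε.1 hx.1, hx.2⟩).hasDerivWithinAt
      · apply ContinuousOn.intervalIntegrable
        rwa [Set.uIcc_of_le hε.2.le]
    have hg1 : g 1 = 0 := by simp [hgdef, hz1]
    rw [h1, hg1, zero_sub]
  -- the integral of gd over (0,1) vanishes
  have hIoo : Set.Ioo (0:ℝ) 1 ∈ nhdsWithin (0:ℝ) (Set.Ioi 0) :=
    Ioo_mem_nhdsGT_of_mem ⟨le_rfl, one_pos⟩
  have hzero : (∫ x in (0:ℝ)..1, gd x) = 0 := by
    have hglim : Filter.Tendsto g (nhdsWithin 0 (Set.Ioi 0)) (nhds 0) := by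
      have hub : Filter.Tendsto (fun ε : ℝ => M * ε ^ b) (nhdsWithin 0 (Set.Ioi 0)) (nhds 0) := by
        have hc : ContinuousAt (fun x : ℝ => x ^ b) 0 :=
          Real.continuousAt_rpow_const 0 b (Or.inr hb0.le)
        have h2 : Filter.Tendsto (fun x : ℝ => M * x ^ b) (nhdsWithin 0 (Set.Ioi 0))
            (nhds (M * (0:ℝ) ^ b)) :=
          (hc.tendsto.mono_left nhdsWithin_le_nhds).const_mul M
        rw [Real.zero_rpow hb0.ne', mul_zero] at h2
        exact h2
      apply squeeze_zero' ?_ ?_ hub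
      · filter_upwards [hIoo] with ε hε
        exact mul_nonneg (Real.rpow_nonneg hε.1.le _) (sq_nonneg _)
      · filter_upwards [hIoo] with ε hε
        calc g ε ≤ ε^(b-3) * (M*ε^3) :=
              mul_le_mul_of_nonneg_left (hzbd ε ⟨hε.1.le, hε.2.le⟩)
                (Real.rpow_nonneg hε.1.le _)
          _ = M * ε ^ b := by
              rw [show (ε:ℝ)^(3:ℕ) = ε^((3:ℕ):ℝ) from (Real.rpow_natCast ε 3).symm,
                mul_comm M _, ← mul_assoc, ← Real.rpow_add hε.1,
                show b - 3 + ((3:ℕ):ℝ) = b by push_cast; ring]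
              ring
    have hcontF : ContinuousOn (fun ε => ∫ x in (0:ℝ)..ε, gd x) (Set.Icc 0 1) := by
      have h3 := intervalIntegral.continuousOn_primitive_interval (μ := volume)
        (f := gd) (a := 0) (b := 1) ?_
      · rwa [huIcc] at h3
      · rw [huIcc]
        exact (intervalIntegrable_iff_integrableOn_Icc_of_le zero_le_one).mp hgdint
    have hF0 : Filter.Tendsto (fun ε => ∫ x in (0:ℝ)..ε, gd x)
        (nhdsWithin 0 (Set.Ioi 0)) (nhds 0) := by
      have h2 : Filter.Tendsto (fun ε => ∫ x in (0:ℝ)..ε, gd x)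
          (nhdsWithin 0 (Set.Icc 0 1)) (nhds (∫ x in (0:ℝ)..(0:ℝ), gd x)) :=
        hcontF 0 (Set.left_mem_Icc.mpr zero_le_one)
      rw [intervalIntegral.integral_same] at h2
      exact h2.mono_left ((nhdsWithin_le_of_mem hIoo).trans
        (nhdsWithin_mono 0 Set.Ioo_subset_Icc_self))
    have hΦ : Filter.Tendsto (fun ε => ∫ x in ε..1, gd x)
        (nhdsWithin 0 (Set.Ioi 0)) (nhds (∫ x in (0:ℝ)..1, gd x)) := by
      have heq : (fun ε => ∫ x in ε..1, gd x) =ᶠ[nhdsWithin 0 (Set.Ioi 0)]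
          (fun ε => (∫ x in (0:ℝ)..1, gd x) - ∫ x in (0:ℝ)..ε, gd x) := by
        filter_upwards [hIoo] with ε hε
        have hsub1 : Set.uIcc (0:ℝ) ε ⊆ Set.uIcc (0:ℝ) 1 := by
          rw [huIcc, Set.uIcc_of_le hε.1.le]; exact Set.Icc_subset_Icc le_rfl hε.2.le
        have hsub2 : Set.uIcc ε 1 ⊆ Set.uIcc (0:ℝ) 1 := by
          rw [huIcc, Set.uIcc_of_le hε.2.le]; exact Set.Icc_subset_Icc hε.1.le le_rfl
        have hadj := intervalIntegral.integral_add_adjacent_intervals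
          (hgdint.mono_set hsub1) (hgdint.mono_set hsub2)
        linarith
      have h4 : Filter.Tendsto (fun ε => (∫ x in (0:ℝ)..1, gd x) - ∫ x in (0:ℝ)..ε, gd x)
          (nhdsWithin 0 (Set.Ioi 0)) (nhds ((∫ x in (0:ℝ)..1, gd x) - 0)) :=
        tendsto_const_nhds.sub hF0
      rw [sub_zero] at h4
      exact Filter.Tendsto.congr' heq.symm h4
    have hmg : Filter.Tendsto (fun ε => ∫ x in ε..1, gd x)
        (nhdsWithin 0 (Set.Ioi 0)) (nhds 0) := by
      have heq2 : (fun ε => ∫ x in ε..1, gd x) =ᶠ[nhdsWithin 0 (Set.Ioi 0)] (fun ε => - g ε) := by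
        filter_upwards [hIoo] with ε hε
        exact hIBP ε hε
      have h5 := hglim.neg
      rw [neg_zero] at h5
      exact Filter.Tendsto.congr' heq2.symm h5
    exact tendsto_nhds_unique hΦ hmg
  -- split the vanishing integral
  have hsplit : (b-3) * (∫ x in (0:ℝ)..1, x^(b-4) * z x^2)
      + 2 * (∫ x in (0:ℝ)..1, x^(b-3) * (z x * z' x)) = 0 := by
    rw [← intervalIntegral.integral_const_mul, ← intervalIntegral.integral_const_mul,
      ← intervalIntegral.integral_add (hf2.const_mul (b-3)) (hf3.const_mul 2)]
    exact hzero
  -- square trick : Hardy inequality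
  have hJ : 0 ≤ ∫ x in (0:ℝ)..1, (x^(b-2) * z' x^2 - (3-b) * (x^(b-3) * (z x * z' x))
      + ((3-b)/2)^2 * (x^(b-4) * z x^2)) := by
    apply intervalIntegral.integral_nonneg zero_le_one
    intro x hx
    rcases eq_or_lt_of_le hx.1 with h0 | hx0
    · rw [← h0, Real.zero_rpow (show b-2 ≠ 0 by intro h; linarith),
        Real.zero_rpow (show b-3 ≠ 0 by intro h; linarith),
        Real.zero_rpow (show b-4 ≠ 0 by intro h; linarith)]
      norm_num
    · have hA : x^((b-2)/2) * x^((b-2)/2) = x^(b-2) := by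
        rw [← Real.rpow_add hx0]; congr 1; ring
      have hAB : x^((b-2)/2) * x^((b-4)/2) = x^(b-3) := by
        rw [← Real.rpow_add hx0]; congr 1; ring
      have hB : x^((b-4)/2) * x^((b-4)/2) = x^(b-4) := by
        rw [← Real.rpow_add hx0]; congr 1; ring
      rw [← hA, ← hAB, ← hB]
      nlinarith [sq_nonneg (x^((b-2)/2) * z' x - ((3-b)/2) * (x^((b-4)/2) * z x))]
  have hJeq : (∫ x in (0:ℝ)..1, (x^(b-2) * z' x^2 - (3-b) * (x^(b-3) * (z x * z' x))
      + ((3-b)/2)^2 * (x^(b-4) * z x^2)))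
      = (∫ x in (0:ℝ)..1, x^(b-2) * z' x^2)
        - (3-b) * (∫ x in (0:ℝ)..1, x^(b-3) * (z x * z' x))
        + ((3-b)/2)^2 * (∫ x in (0:ℝ)..1, x^(b-4) * z x^2) := by
    rw [intervalIntegral.integral_add (hf1.sub (hf3.const_mul (3-b)))
      (hf2.const_mul (((3-b)/2)^2)),
      intervalIntegral.integral_sub hf1 (hf3.const_mul (3-b)),
      intervalIntegral.integral_const_mul, intervalIntegral.integral_const_mul]
  rw [hJeq] at hJ
  have hI2nn : 0 ≤ ∫ x in (0:ℝ)..1, x^(b-4) * z x^2 :=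
    intervalIntegral.integral_nonneg zero_le_one
      (fun x hx => mul_nonneg (Real.rpow_nonneg hx.1 _) (sq_nonneg _))
  refine ⟨hf1, hf2, ?_⟩
  have hHardy : ((3-b)/2)^2 * (∫ x in (0:ℝ)..1, x^(b-4) * z x^2)
      ≤ ∫ x in (0:ℝ)..1, x^(b-2) * z' x^2 := by nlinarith [hJ, hsplit]
  have hbr : 0 ≤ (b/2) * ((1-b)*(3-b) + 1 - 4*ν^2) := by
    rcases le_or_gt ν (1/2) with h | h
    · apply mul_nonneg (by linarith)
      nlinarith [mul_pos (show (0:ℝ) < 1-b by linarith) (show (0:ℝ) < 3-b by linarith),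
        mul_nonneg (show (0:ℝ) ≤ 1/2-ν by linarith) (show (0:ℝ) ≤ 1/2+ν by linarith)]
    · rw [hbν h]; nlinarith
  have e3 := mul_le_mul_of_nonneg_left hHardy (show (0:ℝ) ≤ 2*b*(1-b) by nlinarith)
  nlinarith [mul_nonneg hbr hI2nn, e3]
end
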